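/- arXiv:2411.05304 — 9 statements merged into one kernel-verified Lean document; each statement's English description precedes it below -/
import Mathlib

section
/- Let G be a bipartite graph with m edges. Then the spectral radius of the adjacency matrix of G satisfies ρ(G) ≤ √m. -/
open Matrix SimpleGraph

open Classical in
/-- The adjacency matrix of a simple graph over `ℝ`. -/
noncomputable def adjMat {V : Type} [Fintype V] (G : SimpleGraph V) : Matrix V V ℝ :=
  fun u v => if G.Adj u v then (1 : ℝ) else 0

/-- `ρ` is the spectral radius (largest real eigenvalue) of the adjacency matrix of `G`. -/
def IsSpecRad {V : Type} [Fintype V] (G : SimpleGraph V) (ρ : ℝ) : Prop :=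
  (∃ x : V → ℝ, x ≠ 0 ∧ adjMat G *ᵥ x = ρ • x) ∧
  ∀ μ : ℝ, (∃ x : V → ℝ, x ≠ 0 ∧ adjMat G *ᵥ x = μ • x) → μ ≤ ρ

/-- `G` contains a copy of `F` as a (not necessarily induced) subgraph. -/
def ContainsSub {α β : Type} (F : SimpleGraph α) (G : SimpleGraph β) : Prop :=
  ∃ f : F →g G, Function.Injective f

lemma symm_dot {V : Type} [Fintype V] (A : Matrix V V ℝ) (hA : Aᵀ = A) (u v : V → ℝ) :
    (A *ᵥ u) ⬝ᵥ v = u ⬝ᵥ (A *ᵥ v) := by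
  rw [dotProduct_comm, dotProduct_mulVec, ← mulVec_transpose, hA, dotProduct_comm]

lemma dot_self_nonneg {V : Type} [Fintype V] (u : V → ℝ) : 0 ≤ u ⬝ᵥ u :=
  Finset.sum_nonneg fun i _ => mul_self_nonneg _

lemma key_ineq {V : Type} [Fintype V] (A : Matrix V V ℝ) (hA : Aᵀ = A) (ρ : ℝ)
    (x y : V → ℝ) (hx : A *ᵥ x = ρ • x) (hy : A *ᵥ y = (-ρ) • y)
    (hX : 0 < x ⬝ᵥ x) (hY : 0 < y ⬝ᵥ y) (hxy : x ⬝ᵥ y = 0) (z : V → ℝ) :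
    ρ ^ 2 * ((x ⬝ᵥ z) ^ 2 / (x ⬝ᵥ x) + (y ⬝ᵥ z) ^ 2 / (y ⬝ᵥ y)) ≤ (A *ᵥ z) ⬝ᵥ (A *ᵥ z) := by
  set X := x ⬝ᵥ x with hXdef
  set Y := y ⬝ᵥ y with hYdef
  have hX0 : X ≠ 0 := ne_of_gt hX
  have hY0 : Y ≠ 0 := ne_of_gt hY
  have hyx : y ⬝ᵥ x = 0 := by rw [dotProduct_comm]; exact hxy
  set a : ℝ := (x ⬝ᵥ z) / X with hadef
  set b : ℝ := (y ⬝ᵥ z) / Y with hbdef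
  set w : V → ℝ := z - a • x - b • y with hwdef
  have hwx : w ⬝ᵥ x = 0 := by
    simp only [hwdef, sub_dotProduct, smul_dotProduct, smul_eq_mul, hyx, mul_zero]
    rw [dotProduct_comm z x, hadef]
    field_simp
    rw [← hXdef]; ring
  have hwy : w ⬝ᵥ y = 0 := by
    simp only [hwdef, sub_dotProduct, smul_dotProduct, smul_eq_mul, hxy, mul_zero]
    rw [dotProduct_comm z y, hbdef]
    field_simp
    rw [← hYdef]; ring
  have hz : z = w + a • x + b • y := by
    rw [hwdef]; ext v; simp; ring
  set P : V → ℝ := A *ᵥ w with hPdef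
  have hAz : A *ᵥ z = P + (ρ * a) • x + (-(ρ * b)) • y := by
    rw [hz, mulVec_add, mulVec_add, mulVec_smul, mulVec_smul, hx, hy]
    ext v; simp; ring
  have hPx : P ⬝ᵥ x = 0 := by
    rw [hPdef, symm_dot A hA, hx, dotProduct_smul, hwx, smul_zero]
  have hPy : P ⬝ᵥ y = 0 := by
    rw [hPdef, symm_dot A hA, hy, dotProduct_smul, hwy, smul_zero]
  have hxP : x ⬝ᵥ P = 0 := by rw [dotProduct_comm]; exact hPx
  have hyP : y ⬝ᵥ P = 0 := by rw [dotProduct_comm]; exact hPy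
  have hPP : 0 ≤ P ⬝ᵥ P := dot_self_nonneg P
  have expand : (A *ᵥ z) ⬝ᵥ (A *ᵥ z)
      = P ⬝ᵥ P + (ρ * a) ^ 2 * X + (ρ * b) ^ 2 * Y := by
    rw [hAz]
    simp only [add_dotProduct, dotProduct_add, smul_dotProduct, dotProduct_smul,
      smul_eq_mul, hPx, hPy, hxP, hyP, hxy, hyx, ← hXdef, ← hYdef]
    ring
  rw [expand]
  have h1 : (ρ * a) ^ 2 * X = ρ ^ 2 * ((x ⬝ᵥ z) ^ 2 / X) := by
    rw [hadef]; field_simp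
  have h2 : (ρ * b) ^ 2 * Y = ρ ^ 2 * ((y ⬝ᵥ z) ^ 2 / Y) := by
    rw [hbdef]; field_simp
  rw [h1, h2]; linarith

/-- A bipartite graph with `m` edges has spectral radius at most `√m`. -/
theorem bipartite_specRad_le_sqrt {V : Type} [Fintype V] (G : SimpleGraph V)
    (m : ℕ) (hm : G.edgeSet.ncard = m) (hbip : G.Colorable 2)
    (ρ : ℝ) (hρ : IsSpecRad G ρ) :
    ρ ≤ Real.sqrt m := by
  classical
  obtain ⟨⟨x, hx0, hx⟩, hmax⟩ := hρ
  set A := adjMat G with hAdef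
  have hA : Aᵀ = A := by
    ext u v; simp only [transpose_apply, hAdef, adjMat]
    rw [G.adj_comm]
  -- sign vector from the 2-coloring
  obtain c := hbip.some
  set s : V → ℝ := fun v => if c v = 0 then 1 else -1 with hsdef
  have hs : ∀ v, s v = 1 ∨ s v = -1 := by
    intro v; by_cases h : c v = 0 <;> simp [hsdef, h]
  have hss : ∀ v, s v * s v = 1 := by
    intro v; rcases hs v with h | h <;> rw [h] <;> norm_num
  have hadj : ∀ u v, G.Adj u v → s v = -s u := by
    intro u v huv
    have hne : c u ≠ c v := c.valid huv
    have h2 : ∀ i : Fin 2, i = 0 ∨ i = 1 := by decide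
    rcases h2 (c u) with h | h <;> rcases h2 (c v) with h' | h'
    · exact absurd (h.trans h'.symm) hne
    · simp [hsdef, h, h']
    · simp [hsdef, h, h']
    · exact absurd (h.trans h'.symm) hne
  set y : V → ℝ := fun v => s v * x v with hydef
  have hy : A *ᵥ y = (-ρ) • y := by
    ext u
    have step : ∀ v, A u v * (s v * x v) = (-s u) * (A u v * x v) := by
      intro v
      by_cases h : G.Adj u v
      · rw [hadj u v h]; ring
      · have : A u v = 0 := by simp [hAdef, adjMat, h]
        rw [this]; ring
    have : (A *ᵥ y) u = (-s u) * ((A *ᵥ x) u) := by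
      simp only [mulVec, dotProduct, hydef]
      rw [Finset.mul_sum]
      exact Finset.sum_congr rfl fun v _ => step v
    rw [this, hx]
    simp [hydef]; ring
  have hy0 : y ≠ 0 := by
    intro h
    apply hx0
    ext v
    have : y v = 0 := by rw [h]; rfl
    have h2 : s v * y v = 0 := by rw [this, mul_zero]
    rw [hydef] at h2
    simp only [← mul_assoc, hss, one_mul] at h2
    exact h2
  have hρ0 : 0 ≤ ρ := by
    have := hmax (-ρ) ⟨y, hy0, hy⟩
    linarith
  rcases eq_or_lt_of_le hρ0 with h0 | hpos
  · rw [← h0]; exact Real.sqrt_nonneg _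
  -- orthogonality
  have hxx : 0 < x ⬝ᵥ x := by
    rcases (dot_self_nonneg x).eq_or_lt with h | h
    · exact absurd (dotProduct_self_eq_zero.mp h.symm) hx0
    · exact h
  have hyy : 0 < y ⬝ᵥ y := by
    rcases (dot_self_nonneg y).eq_or_lt with h | h
    · exact absurd (dotProduct_self_eq_zero.mp h.symm) hy0
    · exact h
  have hxy : x ⬝ᵥ y = 0 := by
    have h1 : (A *ᵥ x) ⬝ᵥ y = ρ * (x ⬝ᵥ y) := by
      rw [hx, smul_dotProduct, smul_eq_mul]
    have h2 : x ⬝ᵥ (A *ᵥ y) = (-ρ) * (x ⬝ᵥ y) := by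
      rw [hy, dotProduct_smul, smul_eq_mul]
    have h3 := symm_dot A hA x y
    rw [h1, h2] at h3
    have hρne : ρ ≠ 0 := ne_of_gt hpos
    have hmul : ρ * (x ⬝ᵥ y) = 0 := by linarith
    rcases mul_eq_zero.mp hmul with h | h
    · exact absurd h hρne
    · exact h
  -- sum the key inequality over basis vectors
  have key := fun v : V => key_ineq A hA ρ x y hx hy hxx hyy hxy (Pi.single v 1)
  have hsum := Finset.sum_le_sum (fun v (_ : v ∈ Finset.univ) => key v)
  -- evaluate the left sum
  have hdot_single : ∀ (u : V → ℝ) (v : V), u ⬝ᵥ Pi.single v 1 = u v := by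
    intro u v; simp
  have lhs_eval : ∑ v, ρ ^ 2 * ((x ⬝ᵥ Pi.single v 1) ^ 2 / (x ⬝ᵥ x)
      + (y ⬝ᵥ Pi.single v 1) ^ 2 / (y ⬝ᵥ y)) = 2 * ρ ^ 2 := by
    simp only [hdot_single]
    rw [← Finset.mul_sum, Finset.sum_add_distrib, ← Finset.sum_div, ← Finset.sum_div]
    have e1 : ∑ v, (x v) ^ 2 = x ⬝ᵥ x := by
      simp [dotProduct, pow_two]
    have e2 : ∑ v, (y v) ^ 2 = y ⬝ᵥ y := by
      simp [dotProduct, pow_two]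
    rw [e1, e2, div_self (ne_of_gt hxx), div_self (ne_of_gt hyy)]
    ring
  -- evaluate the right sum: it is 2m
  have rhs_eval : ∑ v, (A *ᵥ Pi.single v 1) ⬝ᵥ (A *ᵥ Pi.single v 1) = 2 * (m : ℝ) := by
    have hAe : ∀ (u v : V), (A *ᵥ Pi.single v 1) u = A u v := by
      intro u v; simp [mulVec, dotProduct, Pi.single_apply]
    have step1 : ∑ v, (A *ᵥ Pi.single v 1) ⬝ᵥ (A *ᵥ Pi.single v 1)
        = ∑ v, ∑ u, A u v * A u v := by
      refine Finset.sum_congr rfl fun v _ => ?_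
      simp only [dotProduct, hAe]
    have hsq : ∀ u v, A u v * A u v = A u v := by
      intro u v
      simp only [hAdef, adjMat]
      split <;> ring
    have step2 : ∑ v, ∑ u, A u v * A u v = ∑ v, ∑ u, A u v := by
      refine Finset.sum_congr rfl fun v _ => Finset.sum_congr rfl fun u _ => hsq u v
    have degrow : ∀ u : V, ∑ v, A u v = (G.degree u : ℝ) := by
      intro u
      simp only [hAdef, adjMat]
      rw [Finset.sum_boole]
      congr 1
      rw [SimpleGraph.degree, SimpleGraph.neighborFinset_eq_filter]
    have step3 : ∑ v : V, ∑ u : V, A u v = ((∑ v, G.degree v : ℕ) : ℝ) := by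
      push_cast
      rw [Finset.sum_comm]
      exact Finset.sum_congr rfl fun u _ => degrow u
    have hcard : G.edgeSet.ncard = G.edgeFinset.card := by
      rw [SimpleGraph.edgeFinset, Set.ncard_eq_toFinset_card']
    rw [step1, step2, step3, G.sum_degrees_eq_twice_card_edges]
    rw [← hm, hcard]
    push_cast
    ring
  rw [lhs_eval, rhs_eval] at hsum
  have hρ2 : ρ ^ 2 ≤ (m : ℝ) := by linarith
  exact Real.le_sqrt_of_sq_le hρ2
end

section
/- Let G be a connected graph with Perron eigenvector X = (x_1,...,x_n)^T (positive eigenvector for ρ(G)), let u, v be distinct vertices, and let v_1,...,v_s be vertices in N(v) \ N(u) (none equal to u). Let G' be obtained from G by deleting the edges v_i v and adding the edges v_i u for i = 1,...,s. If x_u ≥ x_v, then ρ(G) < ρ(G'). -/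
open Matrix SimpleGraph

open scoped RealInnerProductSpace

private lemma mulVec_sum' {V ι : Type} [Fintype V] [Fintype ι] (M : Matrix V V ℝ)
    (w : ι → V → ℝ) : M *ᵥ (∑ i, w i) = ∑ i, M *ᵥ (w i) := by
  simpa only [Matrix.mulVecLin_apply] using map_sum (Matrix.mulVecLin M) w Finset.univ

private lemma sum_mulVec' {V ι : Type} [Fintype V] [Fintype ι] (M : ι → Matrix V V ℝ)
    (x : V → ℝ) : (∑ i, M i) *ᵥ x = ∑ i, (M i *ᵥ x) := by
  ext w
  simp only [mulVec, dotProduct, Matrix.sum_apply, Finset.sum_apply, Finset.sum_mul]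
  exact Finset.sum_comm

private lemma dotProduct_sum' {V ι : Type} [Fintype V] [Fintype ι] (x : V → ℝ)
    (w : ι → V → ℝ) : x ⬝ᵥ (∑ i, w i) = ∑ i, x ⬝ᵥ (w i) := by
  simp only [dotProduct, Finset.sum_apply, Finset.mul_sum]
  exact Finset.sum_comm

private lemma rayleigh_bound {V : Type} [Fintype V] [DecidableEq V]
    (M : Matrix V V ℝ) (hM : M.IsHermitian) (r : ℝ)
    (hub : ∀ μ : ℝ, (∃ z : V → ℝ, z ≠ 0 ∧ M *ᵥ z = μ • z) → μ ≤ r)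
    (y : V → ℝ) :
    y ⬝ᵥ (M *ᵥ y) ≤ r * (y ⬝ᵥ y) ∧
      (y ⬝ᵥ (M *ᵥ y) = r * (y ⬝ᵥ y) → M *ᵥ y = r • y) := by
  set b := hM.eigenvectorBasis with hb
  set μ := hM.eigenvalues with hμ
  set e : V → V → ℝ := fun i => ⇑(b i) with he
  set c : V → ℝ := fun i => (e i) ⬝ᵥ y with hc
  have h1 : ∀ i, M *ᵥ e i = μ i • e i := fun i => hM.mulVec_eigenvectorBasis i
  have hne : ∀ i, e i ≠ (0 : V → ℝ) := by
    intro i h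
    exact b.orthonormal.ne_zero i (by ext w; exact congrFun h w)
  have h2 : ∀ i, μ i ≤ r := fun i => hub (μ i) ⟨e i, hne i, h1 i⟩
  have hrepr : y = ∑ i, c i • e i := by
    have h := b.sum_repr' ((WithLp.equiv 2 (V → ℝ)).symm y)
    have h2 : ∀ i, ⟪b i, (WithLp.equiv 2 (V → ℝ)).symm y⟫ = c i := by
      intro i
      simp [PiLp.inner_apply, RCLike.inner_apply, hc, he, dotProduct]
      exact Finset.sum_congr rfl fun _ _ => mul_comm _ _
    simp_rw [h2] at h
    have h' := congrArg WithLp.ofLp h.symm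
    simpa [he] using h'
  have hMy : M *ᵥ y = ∑ i, c i • (μ i • e i) := by
    conv_lhs => rw [hrepr]
    rw [mulVec_sum']
    refine Finset.sum_congr rfl fun i _ => ?_
    rw [mulVec_smul, h1 i]
  have hye : ∀ i, y ⬝ᵥ e i = c i := fun i => dotProduct_comm _ _
  have hquad : y ⬝ᵥ (M *ᵥ y) = ∑ i, μ i * c i ^ 2 := by
    rw [hMy, dotProduct_sum']
    refine Finset.sum_congr rfl fun i _ => ?_
    rw [dotProduct_smul, dotProduct_smul, hye i]
    simp only [smul_eq_mul]; ring
  have hnorm : y ⬝ᵥ y = ∑ i, c i ^ 2 := by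
    nth_rewrite 2 [hrepr]
    rw [dotProduct_sum']
    refine Finset.sum_congr rfl fun i _ => ?_
    rw [dotProduct_smul, hye i]
    simp only [smul_eq_mul]; ring
  have hle : y ⬝ᵥ (M *ᵥ y) ≤ r * (y ⬝ᵥ y) := by
    rw [hquad, hnorm, Finset.mul_sum]
    exact Finset.sum_le_sum fun i _ => mul_le_mul_of_nonneg_right (h2 i) (sq_nonneg _)
  refine ⟨hle, fun heq => ?_⟩
  have hsum : ∑ i, (r - μ i) * c i ^ 2 = 0 := by
    have h3 := hquad
    rw [heq, hnorm, Finset.mul_sum] at h3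
    simp only [sub_mul]
    rw [Finset.sum_sub_distrib]
    linarith [h3]
  have hzero : ∀ i ∈ Finset.univ, (r - μ i) * c i ^ 2 = 0 :=
    fun i _ => (Finset.sum_eq_zero_iff_of_nonneg
      (fun i _ => mul_nonneg (by linarith [h2 i]) (sq_nonneg _))).1 hsum i (Finset.mem_univ i)
  have hkey : ∀ i, c i • (μ i • e i) = c i • (r • e i) := by
    intro i
    rcases mul_eq_zero.1 (hzero i (Finset.mem_univ i)) with h | h
    · rw [show μ i = r by linarith]
    · rw [pow_eq_zero_iff (by norm_num : (2:ℕ) ≠ 0)] at h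
      rw [h]; simp
  rw [hMy]
  simp_rw [hkey]
  conv_rhs => rw [hrepr, Finset.smul_sum]
  refine Finset.sum_congr rfl fun i _ => ?_
  rw [smul_comm]

private lemma sum_ind {V : Type} [Fintype V] [DecidableEq V] {s : ℕ} (f : Fin s → V)
    (hinj : Function.Injective f) (w : V) :
    (∑ i, if f i = w then (1:ℝ) else 0) = if ∃ i, f i = w then 1 else 0 := by
  by_cases h : ∃ i, f i = w
  · obtain ⟨i0, hi0⟩ := h
    rw [if_pos ⟨i0, hi0⟩, Finset.sum_eq_single i0]
    · simp [hi0]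
    · intro j _ hj
      exact if_neg fun hw => hj (hinj (hw.trans hi0.symm))
    · simp
  · rw [if_neg h]
    exact Finset.sum_eq_zero fun i _ => if_neg fun hw => h ⟨i, hw⟩

private lemma sum_ind_left {V : Type} [Fintype V] [DecidableEq V] {s : ℕ} (f : Fin s → V)
    (hinj : Function.Injective f) (w : V) (p : Prop) [Decidable p] :
    (∑ i, if f i = w ∧ p then (1:ℝ) else 0) = if (∃ i, f i = w) ∧ p then 1 else 0 := by
  by_cases hp : p
  · simp only [hp, and_true]; exact sum_ind f hinj w
  · simp [hp]

private lemma sum_ind_right {V : Type} [Fintype V] [DecidableEq V] {s : ℕ} (f : Fin s → V)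
    (hinj : Function.Injective f) (w : V) (p : Prop) [Decidable p] :
    (∑ i, if p ∧ f i = w then (1:ℝ) else 0) = if (∃ i, f i = w) ∧ p then 1 else 0 := by
  simp only [and_comm (a := p)]
  exact sum_ind_left f hinj w p

private lemma dot_std {V : Type} [Fintype V] [DecidableEq V] (p q : V) (x : V → ℝ) :
    x ⬝ᵥ (Matrix.single p q (1:ℝ) *ᵥ x) = x p * x q := by
  rw [Matrix.single_mulVec]
  simp [dotProduct, Function.update_apply, mul_ite, Finset.sum_ite_eq']

private lemma std_mulVec_apply {V : Type} [Fintype V] [DecidableEq V] (p q w : V) (x : V → ℝ) :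
    (Matrix.single p q (1:ℝ) *ᵥ x) w = if w = p then x q else 0 := by
  rw [Matrix.single_mulVec, Function.update_apply]
  simp

/-- rotation lemma: if `G'` is obtained from the connected graph `G` by
replacing the edges `v_i v` (`v_i ∈ N(v) \ N(u)`, `v_i ≠ u`) with the edges `v_i u`,
and the Perron entry of `u` is at least that of `v`, then `ρ(G) < ρ(G')`. -/
theorem rotation_increases_specRad {V : Type} [Fintype V]
    (G G' : SimpleGraph V) (hGc : G.Connected)
    (ρ ρ' : ℝ) (x : V → ℝ)
    (hspec : IsSpecRad G ρ) (hpos : ∀ w, 0 < x w) (heig : adjMat G *ᵥ x = ρ • x)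
    (u v : V) (huv : u ≠ v)
    (s : ℕ) (hs : 1 ≤ s) (f : Fin s → V) (hinj : Function.Injective f)
    (hfv : ∀ i, G.Adj v (f i)) (hfu : ∀ i, ¬ G.Adj u (f i)) (hfne : ∀ i, f i ≠ u)
    (hG' : G'.edgeSet =
      (G.edgeSet \ Set.range fun i => s(f i, v)) ∪ Set.range fun i => s(f i, u))
    (hxu : x v ≤ x u) (hspec' : IsSpecRad G' ρ') :
    ρ < ρ' := by
  classical
  have hfnv : ∀ i, f i ≠ v := fun i => (hfv i).ne'
  -- adjacency characterization of G'
  have hadj' : ∀ a b : V, G'.Adj a b ↔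
      (G.Adj a b ∧ ¬(((∃ i, f i = a) ∧ v = b) ∨ ((∃ i, f i = b) ∧ v = a))) ∨
      (((∃ i, f i = a) ∧ u = b) ∨ ((∃ i, f i = b) ∧ u = a)) := by
    intro a b
    rw [← SimpleGraph.mem_edgeSet, hG']
    simp only [Set.mem_union, Set.mem_diff, Set.mem_range, SimpleGraph.mem_edgeSet,
      Sym2.eq_iff, exists_or, exists_and_right]
  -- matrix decomposition
  have hdecomp :
      adjMat G' + (∑ i, (Matrix.single (f i) v (1:ℝ) + Matrix.single v (f i) (1:ℝ)))
        = adjMat G + (∑ i, (Matrix.single (f i) u (1:ℝ) + Matrix.single u (f i) (1:ℝ))) := by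
    ext a b
    simp only [Matrix.add_apply, Matrix.sum_apply, Matrix.single, of_apply,
      Finset.sum_add_distrib]
    rw [sum_ind_left f hinj a (v = b), sum_ind_right f hinj b (v = a),
      sum_ind_left f hinj a (u = b), sum_ind_right f hinj b (u = a)]
    show (if G'.Adj a b then (1:ℝ) else 0) + _ = (if G.Adj a b then (1:ℝ) else 0) + _
    by_cases hQ1 : (∃ i, f i = a) ∧ u = b
    · obtain ⟨⟨i, hia⟩, hub⟩ := hQ1
      have hg : ¬ G.Adj a b := fun h => hfu i (by rw [← hia, ← hub] at h; exact h.symm)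
      have hP1 : ¬((∃ i, f i = a) ∧ v = b) := fun ⟨_, hvb⟩ => huv (hub.trans hvb.symm)
      have hP2 : ¬((∃ i, f i = b) ∧ v = a) := fun ⟨⟨j, hjb⟩, _⟩ => hfne j (hjb.trans hub.symm)
      have hQ2 : ¬((∃ i, f i = b) ∧ u = a) := fun ⟨⟨j, hjb⟩, _⟩ => hfne j (hjb.trans hub.symm)
      have hg' : G'.Adj a b := (hadj' a b).2 (Or.inr (Or.inl ⟨⟨i, hia⟩, hub⟩))
      rw [if_pos hg', if_neg hg, if_neg hP1, if_neg hP2, if_pos ⟨⟨i, hia⟩, hub⟩, if_neg hQ2]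
      ring
    · by_cases hQ2 : (∃ i, f i = b) ∧ u = a
      · obtain ⟨⟨i, hib⟩, hua⟩ := hQ2
        have hg : ¬ G.Adj a b := fun h => hfu i (by rw [← hib, ← hua] at h; exact h)
        have hP1 : ¬((∃ i, f i = a) ∧ v = b) := fun ⟨⟨j, hja⟩, _⟩ => hfne j (hja.trans hua.symm)
        have hP2 : ¬((∃ i, f i = b) ∧ v = a) := fun ⟨_, hva⟩ => huv (hua.trans hva.symm)
        have hg' : G'.Adj a b := (hadj' a b).2 (Or.inr (Or.inr ⟨⟨i, hib⟩, hua⟩))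
        rw [if_pos hg', if_neg hg, if_neg hP1, if_neg hP2, if_neg hQ1, if_pos ⟨⟨i, hib⟩, hua⟩]
        ring
      · by_cases hP1 : (∃ i, f i = a) ∧ v = b
        · obtain ⟨⟨i, hia⟩, hvb⟩ := hP1
          have hg : G.Adj a b := by rw [← hia, ← hvb]; exact (hfv i).symm
          have hP2 : ¬((∃ i, f i = b) ∧ v = a) := fun ⟨⟨j, hjb⟩, _⟩ => hfnv j (hjb.trans hvb.symm)
          have hg' : ¬ G'.Adj a b := by
            intro h
            rcases (hadj' a b).1 h with ⟨_, hno⟩ | hq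
            · exact hno (Or.inl ⟨⟨i, hia⟩, hvb⟩)
            · rcases hq with h1 | h2
              · exact hQ1 h1
              · exact hQ2 h2
          rw [if_neg hg', if_pos hg, if_pos ⟨⟨i, hia⟩, hvb⟩, if_neg hP2, if_neg hQ1, if_neg hQ2]
          ring
        · by_cases hP2 : (∃ i, f i = b) ∧ v = a
          · obtain ⟨⟨i, hib⟩, hva⟩ := hP2
            have hg : G.Adj a b := by rw [← hib, ← hva]; exact hfv i
            have hg' : ¬ G'.Adj a b := by
              intro h
              rcases (hadj' a b).1 h with ⟨_, hno⟩ | hq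
              · exact hno (Or.inr ⟨⟨i, hib⟩, hva⟩)
              · rcases hq with h1 | h2
                · exact hQ1 h1
                · exact hQ2 h2
            rw [if_neg hg', if_pos hg, if_neg hP1, if_pos ⟨⟨i, hib⟩, hva⟩, if_neg hQ1, if_neg hQ2]
            ring
          · have hiff : G'.Adj a b ↔ G.Adj a b := by
              rw [hadj' a b]
              constructor
              · rintro (⟨h, _⟩ | (h1 | h2))
                · exact h
                · exact absurd h1 hQ1
                · exact absurd h2 hQ2
              · intro h
                exact Or.inl ⟨h, fun hor => hor.elim hP1 hP2⟩
            rw [if_neg hP1, if_neg hP2, if_neg hQ1, if_neg hQ2]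
            by_cases hg : G.Adj a b
            · rw [if_pos hg, if_pos (hiff.2 hg)]
            · rw [if_neg hg, if_neg (fun h => hg (hiff.1 h))]
  -- mulVec version
  have hmul : adjMat G' *ᵥ x + ∑ i, (Matrix.single (f i) v (1:ℝ) *ᵥ x
        + Matrix.single v (f i) (1:ℝ) *ᵥ x)
      = adjMat G *ᵥ x + ∑ i, (Matrix.single (f i) u (1:ℝ) *ᵥ x
        + Matrix.single u (f i) (1:ℝ) *ᵥ x) := by
    have h := congrArg (fun M => M *ᵥ x) hdecomp
    simp only [add_mulVec, sum_mulVec'] at h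
    exact h
  set S : ℝ := ∑ i, x (f i) with hS
  have hSpos : 0 < S := by
    have : Nonempty (Fin s) := ⟨⟨0, hs⟩⟩
    exact Finset.sum_pos (fun i _ => hpos _) Finset.univ_nonempty
  -- row at u
  have hrowu : (adjMat G' *ᵥ x) u = (adjMat G *ᵥ x) u + S := by
    have hune : ∀ i : Fin s, ¬ (u = f i) := fun i hh => hfne i hh.symm
    have h := congrFun hmul u
    simp only [Pi.add_apply, Finset.sum_apply, std_mulVec_apply, if_neg huv,
      if_neg (hune _), if_pos rfl, add_zero, zero_add, Finset.sum_const_zero] at h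
    exact h
  -- quadratic form version
  have hdot : x ⬝ᵥ (adjMat G' *ᵥ x) + 2 * x v * S = x ⬝ᵥ (adjMat G *ᵥ x) + 2 * x u * S := by
    have h := congrArg (fun w => x ⬝ᵥ w) hmul
    simp only [dotProduct_add, dotProduct_sum', dot_std] at h
    have e1 : ∑ i, (x (f i) * x v + x v * x (f i)) = 2 * x v * S := by
      rw [hS, Finset.mul_sum]
      exact Finset.sum_congr rfl fun i _ => by ring
    have e2 : ∑ i, (x (f i) * x u + x u * x (f i)) = 2 * x u * S := by
      rw [hS, Finset.mul_sum]
      exact Finset.sum_congr rfl fun i _ => by ring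
    rw [e1, e2] at h
    exact h
  have hxAx : x ⬝ᵥ (adjMat G *ᵥ x) = ρ * (x ⬝ᵥ x) := by
    rw [heig, dotProduct_smul, smul_eq_mul]
  have hxx : 0 < x ⬝ᵥ x := by
    have : Nonempty V := hGc.nonempty
    exact Finset.sum_pos (fun w _ => mul_pos (hpos w) (hpos w)) Finset.univ_nonempty
  have hherm : (adjMat G').IsHermitian := by
    show _ᴴ = _
    ext a b
    simp only [Matrix.conjTranspose_apply, adjMat, star_trivial]
    exact if_congr (G'.adj_comm b a) rfl rfl
  obtain ⟨hray, heqc⟩ := rayleigh_bound (adjMat G') hherm ρ' hspec'.2 x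
  have hquad : x ⬝ᵥ (adjMat G' *ᵥ x) = ρ * (x ⬝ᵥ x) + 2 * (x u - x v) * S := by
    rw [← hxAx]; linarith [hdot]
  have hge : ρ * (x ⬝ᵥ x) ≤ x ⬝ᵥ (adjMat G' *ᵥ x) := by
    rw [hquad]
    nlinarith [hSpos, hxu]
  have hle' : ρ ≤ ρ' := by
    have := hge.trans hray
    exact le_of_mul_le_mul_right (by linarith) hxx
  rcases lt_or_eq_of_le hle' with h | h
  · exact h
  · exfalso
    -- ρ = ρ' : equality case
    have heq : x ⬝ᵥ (adjMat G' *ᵥ x) = ρ' * (x ⬝ᵥ x) := by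
      refine le_antisymm hray ?_
      rw [← h]
      exact hge
    have hev := heqc heq
    have h1 := congrFun hev u
    have h2 := congrFun heig u
    simp only [Pi.smul_apply, smul_eq_mul] at h1 h2
    rw [hrowu, h2, ← h] at h1
    linarith
end

section
/- For every even integer m ≥ 6, the spectral radius of the graph S^-_{(m+4)/2, 2} is strictly greater than (1 + √(4m−5))/2. -/
open Matrix SimpleGraph

/-- The graph `S⁻_{t+2,2}`: the join of `K_2` (the two `inl` vertices) with `t` independent
vertices, with the single edge from `inl 0` to `inr 0` deleted. It has `2t` edges.
For even `m`, `SminusG (m/2)` is the graph `S⁻_{(m+4)/2, 2}` of the paper. -/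
def SminusG (t : ℕ) : SimpleGraph (Fin 2 ⊕ Fin t) :=
  SimpleGraph.fromRel (fun x y =>
    match x, y with
    | Sum.inl _, Sum.inl _ => True
    | Sum.inl a, Sum.inr c => ¬(a = 0 ∧ (c : ℕ) = 0)
    | _, _ => False)


lemma adjMat_herm {V : Type} [Fintype V] (G : SimpleGraph V) : (adjMat G).IsHermitian := by
  ext u v
  simp only [adjMat, Matrix.conjTranspose_apply, star_trivial]
  rw [SimpleGraph.adj_comm]

lemma dot_sum' {V : Type} [Fintype V] (x : V → ℝ) (y : V → V → ℝ) :
    x ⬝ᵥ (∑ i, y i) = ∑ i, x ⬝ᵥ y i := by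
  simp only [dotProduct, Finset.sum_apply, Finset.mul_sum]
  rw [Finset.sum_comm]

lemma rayleigh_lt {V : Type} [Fintype V] [DecidableEq V] (G : SimpleGraph V)
    (ρ c : ℝ) (hρ : IsSpecRad G ρ) (x : V → ℝ)
    (h : c * (x ⬝ᵥ x) < x ⬝ᵥ (adjMat G *ᵥ x)) : c < ρ := by
  have hH := adjMat_herm G
  set b := hH.eigenvectorBasis with hb
  set cf : V → ℝ := fun i => (b.repr (WithLp.toLp 2 x)) i with hcf
  have hxe : ∑ i, cf i • (b i) = (WithLp.toLp 2 x) := b.sum_repr (WithLp.toLp 2 x)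
  have hxf : x = ∑ i, cf i • (⇑(b i) : V → ℝ) := by
    have := congrArg (WithLp.linearEquiv 2 ℝ (V → ℝ)) hxe
    rw [map_sum] at this
    simp only [_root_.map_smul] at this
    exact this.symm
  have hdot : ∀ i, x ⬝ᵥ ⇑(b i) = cf i := by
    intro i
    have h1 : cf i = inner ℝ (b i) (WithLp.toLp 2 x) := b.repr_apply_apply (WithLp.toLp 2 x) i
    rw [h1, PiLp.inner_apply]
    simp [dotProduct, mul_comm]
  have heig : ∀ i, hH.eigenvalues i ≤ ρ := fun i =>
    hρ.2 _ ⟨⇑(b i), fun h0 => b.orthonormal.ne_zero i (by ext j; exact congrFun h0 j),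
      hH.mulVec_eigenvectorBasis i⟩
  have hms : adjMat G *ᵥ (∑ i, cf i • (⇑(b i) : V → ℝ))
      = ∑ i, cf i • (adjMat G *ᵥ ⇑(b i)) := by
    simp only [← Matrix.mulVecLin_apply, map_sum, _root_.map_smul]
  have hAx : adjMat G *ᵥ x = ∑ i, (hH.eigenvalues i * cf i) • (⇑(b i) : V → ℝ) := by
    conv_lhs => rw [hxf]
    rw [hms]
    simp only [hb, hH.mulVec_eigenvectorBasis, smul_smul, mul_comm]
  have hQ : x ⬝ᵥ (adjMat G *ᵥ x) = ∑ i, hH.eigenvalues i * cf i ^ 2 := by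
    rw [hAx, dot_sum']
    simp only [dotProduct_smul, smul_eq_mul, hdot]
    exact Finset.sum_congr rfl fun i _ => by ring
  have hN : x ⬝ᵥ x = ∑ i, cf i ^ 2 := by
    have h2 : x ⬝ᵥ x = x ⬝ᵥ (∑ i, cf i • (⇑(b i) : V → ℝ)) := by rw [← hxf]
    rw [h2, dot_sum']
    simp only [dotProduct_smul, smul_eq_mul, hdot]
    exact Finset.sum_congr rfl fun i _ => by ring
  have hQle : x ⬝ᵥ (adjMat G *ᵥ x) ≤ ρ * (x ⬝ᵥ x) := by
    rw [hQ, hN, Finset.mul_sum]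
    exact Finset.sum_le_sum fun i _ => mul_le_mul_of_nonneg_right (heig i) (sq_nonneg _)
  have hNpos : 0 < x ⬝ᵥ x := by
    rcases lt_or_eq_of_le (by rw [hN]; exact Finset.sum_nonneg fun i _ => sq_nonneg _ :
        (0:ℝ) ≤ x ⬝ᵥ x) with h1 | h1
    · exact h1
    · exfalso
      have := h.trans_le hQle
      rw [← h1] at this
      simp at this
  have := h.trans_le hQle
  exact lt_of_mul_lt_mul_right (by linarith [this]) (le_of_lt hNpos) |>.trans_le le_rfl

lemma sum_ite_fin' (t : ℕ) (ht : 0 < t) (u w : ℝ) :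
    ∑ c : Fin t, (if (c : ℕ) = 0 then u else w) = u + ((t : ℝ) - 1) * w := by
  obtain ⟨n, rfl⟩ := Nat.exists_eq_succ_of_ne_zero ht.ne'
  rw [Fin.sum_univ_succ]
  simp only [Fin.val_zero, if_pos rfl, Fin.val_succ, Nat.succ_ne_zero, if_false,
    Finset.sum_const, Finset.card_univ, Fintype.card_fin, nsmul_eq_mul]
  push_cast
  ring

lemma adjMat_Sminus (t : ℕ) (u v : Fin 2 ⊕ Fin t) :
    adjMat (SminusG t) u v = match u, v with
      | Sum.inl a, Sum.inl b => if a = b then 0 else 1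
      | Sum.inl a, Sum.inr c => if a = 0 ∧ (c : ℕ) = 0 then 0 else 1
      | Sum.inr c, Sum.inl a => if a = 0 ∧ (c : ℕ) = 0 then 0 else 1
      | Sum.inr _, Sum.inr _ => 0 := by
  rcases u with a | c <;> rcases v with b | d <;>
    simp only [adjMat, SminusG, SimpleGraph.fromRel_adj] <;>
    [skip; skip; skip; skip]
  · by_cases h : a = b <;> simp [h]
  · by_cases h : a = 0 ∧ (d : ℕ) = 0 <;> simp [h]
  · by_cases h : b = 0 ∧ (c : ℕ) = 0 <;> simp [h]
  · simp

section main
variable (t : ℕ) (lam A C : ℝ)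

noncomputable def tv : Fin 2 ⊕ Fin t → ℝ :=
  Sum.elim (fun a => if a = 0 then lam * C else lam * A)
    (fun c => if (c : ℕ) = 0 then A else A + C)

lemma mv_inl0 (ht : 0 < t) :
    (adjMat (SminusG t) *ᵥ tv t lam A C) (Sum.inl 0)
      = lam * A + ((t : ℝ) - 1) * (A + C) := by
  simp only [Matrix.mulVec, dotProduct, Fintype.sum_sum_type, Fin.sum_univ_two,
    adjMat_Sminus, tv, Sum.elim_inl, Sum.elim_inr]
  simp only [eq_self_iff_true, true_and]
  have h1 : ∀ c : Fin t,
      (if (c : ℕ) = 0 then (0:ℝ) else 1) *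
        (if (c : ℕ) = 0 then A else A + C) = if (c : ℕ) = 0 then 0 else A + C := by
    intro c; by_cases hc : (c : ℕ) = 0 <;> simp [hc]
  rw [Finset.sum_congr rfl fun c _ => h1 c, sum_ite_fin' t ht]
  norm_num

lemma mv_inl1 (ht : 0 < t) :
    (adjMat (SminusG t) *ᵥ tv t lam A C) (Sum.inl 1)
      = lam * C + (A + ((t : ℝ) - 1) * (A + C)) := by
  simp only [Matrix.mulVec, dotProduct, Fintype.sum_sum_type, Fin.sum_univ_two,
    adjMat_Sminus, tv, Sum.elim_inl, Sum.elim_inr]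
  have h1 : ∀ c : Fin t,
      (if (1 : Fin 2) = 0 ∧ (c : ℕ) = 0 then (0:ℝ) else 1) *
        (if (c : ℕ) = 0 then A else A + C) = if (c : ℕ) = 0 then A else A + C := by
    intro c
    have : ¬((1 : Fin 2) = 0 ∧ (c : ℕ) = 0) := by rintro ⟨h, -⟩; exact absurd h (by decide)
    rw [if_neg this, one_mul]
  rw [Finset.sum_congr rfl fun c _ => h1 c, sum_ite_fin' t ht]
  simp [show (1 : Fin 2) ≠ 0 from by decide]

lemma mv_inr (c : Fin t) :
    (adjMat (SminusG t) *ᵥ tv t lam A C) (Sum.inr c)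
      = if (c : ℕ) = 0 then lam * A else lam * C + lam * A := by
  simp only [Matrix.mulVec, dotProduct, Fintype.sum_sum_type, Fin.sum_univ_two,
    adjMat_Sminus, tv, Sum.elim_inl, Sum.elim_inr]
  by_cases hc : (c : ℕ) = 0 <;>
    simp [hc, show (1 : Fin 2) ≠ 0 from by decide]

lemma tv_Q (ht : 0 < t) :
    tv t lam A C ⬝ᵥ (adjMat (SminusG t) *ᵥ tv t lam A C)
      = lam * C * (lam * A + ((t:ℝ) - 1) * (A + C))
        + lam * A * (lam * C + (A + ((t:ℝ) - 1) * (A + C)))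
        + (A * (lam * A) + ((t:ℝ) - 1) * ((A + C) * (lam * C + lam * A))) := by
  rw [dotProduct, Fintype.sum_sum_type, Fin.sum_univ_two]
  rw [mv_inl0 t lam A C ht, mv_inl1 t lam A C ht]
  have h1 : ∀ c : Fin t, tv t lam A C (Sum.inr c) *
      (adjMat (SminusG t) *ᵥ tv t lam A C) (Sum.inr c)
      = if (c : ℕ) = 0 then A * (lam * A) else (A + C) * (lam * C + lam * A) := by
    intro c
    rw [mv_inr]
    by_cases hc : (c : ℕ) = 0 <;> simp [tv, hc]
  rw [Finset.sum_congr rfl fun c _ => h1 c, sum_ite_fin' t ht]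
  simp [tv, show (1 : Fin 2) ≠ 0 from by decide]

lemma tv_N (ht : 0 < t) :
    tv t lam A C ⬝ᵥ tv t lam A C
      = lam * C * (lam * C) + lam * A * (lam * A)
        + (A * A + ((t:ℝ) - 1) * ((A + C) * (A + C))) := by
  rw [dotProduct, Fintype.sum_sum_type, Fin.sum_univ_two]
  have h1 : ∀ c : Fin t, tv t lam A C (Sum.inr c) * tv t lam A C (Sum.inr c)
      = if (c : ℕ) = 0 then A * A else (A + C) * (A + C) := by
    intro c; by_cases hc : (c : ℕ) = 0 <;> simp [tv, hc]
  rw [Finset.sum_congr rfl fun c _ => h1 c, sum_ite_fin' t ht]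
  simp [tv, show (1 : Fin 2) ≠ 0 from by decide]

end main

/-- for even `m ≥ 6`, `ρ(S⁻_{(m+4)/2,2}) > (1 + √(4m-5))/2`. -/
theorem specRad_Sminus_gt (m : ℕ) (hme : Even m) (hm : 6 ≤ m)
    (ρ : ℝ) (hρ : IsSpecRad (SminusG (m / 2)) ρ) :
    (1 + Real.sqrt (4 * m - 5)) / 2 < ρ := by
  set t := m / 2 with htdef
  have ht : 0 < t := by omega
  have hmt : (m : ℝ) = 2 * (t : ℝ) := by
    have : t * 2 = m := Nat.div_mul_cancel hme.two_dvd
    push_cast [← this]; ring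
  set s := Real.sqrt (4 * m - 5) with hsdef
  have hs0 : 0 ≤ s := Real.sqrt_nonneg _
  have hs2 : s ^ 2 = 4 * (m : ℝ) - 5 := Real.sq_sqrt (by
    have : (6 : ℝ) ≤ (m : ℝ) := by exact_mod_cast hm
    linarith)
  set lam := (1 + s) / 2 with hlamdef
  have hlam2 : lam ^ 2 = lam + (m : ℝ) - 3 / 2 := by
    rw [hlamdef]; linear_combination hs2 / 4
  have hlampos : 0 < lam := by rw [hlamdef]; linarith
  set T := (t : ℝ) with hT
  have hT1 : (1 : ℝ) ≤ T := by rw [hT]; exact_mod_cast ht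
  set A := lam + T - 1 / 2 with hA
  set C := lam + T - 1 with hC
  have hApos : 0 < A := by rw [hA]; linarith
  have hl2 : lam ^ 2 = lam + 2 * T - 3 / 2 := by rw [hlam2, hmt]
  clear_value s lam T A C
  have hkey : lam * (tv t lam A C ⬝ᵥ tv t lam A C)
      < tv t lam A C ⬝ᵥ (adjMat (SminusG t) *ᵥ tv t lam A C) := by
    rw [tv_Q t lam A C ht, tv_N t lam A C ht]
    simp only [← hT]
    have hid : lam * C * (lam * A + (T - 1) * (A + C))
        + lam * A * (lam * C + (A + (T - 1) * (A + C)))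
        + (A * (lam * A) + (T - 1) * ((A + C) * (lam * C + lam * A)))
        - lam * (lam * C * (lam * C) + lam * A * (lam * A)
            + (A * A + (T - 1) * ((A + C) * (A + C))))
        = lam * A / 4 := by
      rw [hA, hC]
      linear_combination (-2 * lam ^ 3 + 3 * lam ^ 2 - 4 * lam ^ 2 * T + 3 * lam * T
        - (5 / 4) * lam - 2 * lam * T ^ 2) * hl2
    have : 0 < lam * A / 4 := by positivity
    nlinarith [hid, this]
  exact rayleigh_lt (SminusG t) ρ lam hρ (tv t lam A C) hkey
end

section
/- Let G_4 be the graph consisting of a vertex u* joined to the center u_0 and all r leaves of a star K_{1,r}, together with t additional pendant vertices attached to u* (so G_4 = K_1 ∨ (K_{1,r} ∪ t·K_1)). Then the spectral radius of G_4 is the largest root of f(x,t) = x⁴ − m x² − (m − t − 1)x + t(m − t − 1)/2, where m = t + 1 + 2r is the number of edges of G_4. -/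
open Matrix SimpleGraph

/-- The graph `G₄ = K₁ ∨ (K_{1,r} ∪ t·K₁)`: the vertex `u* = Sum.inl ()` is joined to the
centre `u₀ = Sum.inr (Sum.inl ())`, the `r` leaves of the star, and `t` pendant vertices;
`u₀` is joined to the `r` leaves. It has `m = t + 1 + 2r` edges. -/
def G4 (r t : ℕ) : SimpleGraph (Unit ⊕ Unit ⊕ Fin r ⊕ Fin t) :=
  SimpleGraph.fromRel (fun x y =>
    (x = Sum.inl () ∧ y ≠ Sum.inl ()) ∨
    (x = Sum.inr (Sum.inl ()) ∧ ∃ i : Fin r, y = Sum.inr (Sum.inr (Sum.inl i))))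

namespace AuxG4

variable {r t : ℕ} (x : Unit ⊕ Unit ⊕ Fin r ⊕ Fin t → ℝ)

lemma row1 : (adjMat (G4 r t) *ᵥ x) (Sum.inl ()) =
    x (Sum.inr (Sum.inl ())) + (∑ i, x (Sum.inr (Sum.inr (Sum.inl i))))
      + ∑ j, x (Sum.inr (Sum.inr (Sum.inr j))) := by
  simp [adjMat, mulVec, dotProduct, Fintype.sum_sum_type, G4]; ring

lemma row2 : (adjMat (G4 r t) *ᵥ x) (Sum.inr (Sum.inl ())) =
    x (Sum.inl ()) + (∑ i, x (Sum.inr (Sum.inr (Sum.inl i)))) := by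
  simp [adjMat, mulVec, dotProduct, Fintype.sum_sum_type, G4]

lemma row3 (i : Fin r) : (adjMat (G4 r t) *ᵥ x) (Sum.inr (Sum.inr (Sum.inl i))) =
    x (Sum.inl ()) + x (Sum.inr (Sum.inl ())) := by
  simp [adjMat, mulVec, dotProduct, Fintype.sum_sum_type, G4]

lemma row4 (j : Fin t) : (adjMat (G4 r t) *ᵥ x) (Sum.inr (Sum.inr (Sum.inr j))) =
    x (Sum.inl ()) := by
  simp [adjMat, mulVec, dotProduct, Fintype.sum_sum_type, G4]

end AuxG4

/-- the spectral radius of `G₄` is the largest root of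
`f(x,t) = x⁴ - m x² - (m - t - 1) x + t (m - t - 1)/2` where `m = t + 1 + 2r`. -/
theorem specRad_G4_largest_root (r t : ℕ) (hr : 1 ≤ r)
    (ρ : ℝ) (hρ : IsSpecRad (G4 r t) ρ) :
    (ρ ^ 4 - (t + 1 + 2 * r : ℝ) * ρ ^ 2 - ((t + 1 + 2 * r : ℝ) - t - 1) * ρ
        + t * ((t + 1 + 2 * r : ℝ) - t - 1) / 2 = 0) ∧
    ∀ y : ℝ, ρ < y →
      0 < y ^ 4 - (t + 1 + 2 * r : ℝ) * y ^ 2 - ((t + 1 + 2 * r : ℝ) - t - 1) * y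
        + t * ((t + 1 + 2 * r : ℝ) - t - 1) / 2 := by
  classical
  obtain ⟨⟨x, hx0, hxe⟩, hmax⟩ := hρ
  have hrr : (1:ℝ) ≤ (r:ℝ) := by exact_mod_cast hr
  have htt : (0:ℝ) ≤ (t:ℝ) := Nat.cast_nonneg t
  set F : ℝ → ℝ := fun z => z^4 - ((t:ℝ)+1+2*(r:ℝ))*z^2 - 2*(r:ℝ)*z + (t:ℝ)*(r:ℝ) with hF
  have hFcont : Continuous F := by fun_prop
  set B : ℝ := (t:ℝ)+1+2*(r:ℝ) + 2*(r:ℝ) + (t:ℝ)*(r:ℝ) + 2 with hB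
  have hbig : ∀ z : ℝ, B ≤ z → 0 < F z := by
    intro z hz
    simp only [hF]
    nlinarith [sq_nonneg z, sq_nonneg (z-1),
      mul_nonneg htt (by linarith : (0:ℝ) ≤ (r:ℝ)), sq_nonneg (z*z - z)]
  set s : ℝ := Real.sqrt ((r:ℝ)+(t:ℝ)) with hsdef
  have hs2 : s^2 = (r:ℝ)+(t:ℝ) := Real.sq_sqrt (by linarith)
  have hs0 : 0 ≤ s := Real.sqrt_nonneg _
  have hs1 : 1 ≤ s := by nlinarith
  have hFs : F s < 0 := by simp only [hF]; nlinarith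
  have hsB : s ≤ B := by nlinarith
  set R : Set ℝ := {z | F z = 0} with hR
  have hRbdd : BddAbove R := by
    refine ⟨B, fun z hz => ?_⟩
    by_contra hc
    push_neg at hc
    exact absurd hz (fun h : z ∈ R => (hbig z hc.le).ne' h)
  have hRclosed : IsClosed R := isClosed_eq hFcont continuous_const
  obtain ⟨z₁, hz₁mem, hz₁0⟩ := intermediate_value_Icc hsB hFcont.continuousOn
    ⟨hFs.le, (hbig B le_rfl).le⟩
  have hz₁R : z₁ ∈ R := hz₁0
  have hRne : R.Nonempty := ⟨z₁, hz₁R⟩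
  set x₀ : ℝ := sSup R with hx₀
  have hx₀R : F x₀ = 0 := hRclosed.csSup_mem hRne hRbdd
  have hx₀F : x₀^4 - ((t:ℝ)+1+2*(r:ℝ))*x₀^2 - 2*(r:ℝ)*x₀ + (t:ℝ)*(r:ℝ) = 0 := hx₀R
  have hx₀pos : 0 < x₀ :=
    lt_of_lt_of_le (by linarith [hz₁mem.1] : (0:ℝ) < z₁) (le_csSup hRbdd hz₁R)
  -- construct an eigenvector for x₀
  set y : Unit ⊕ Unit ⊕ Fin r ⊕ Fin t → ℝ := fun v =>
    match v with
    | Sum.inl _ => x₀^2 - (r:ℝ)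
    | Sum.inr (Sum.inl _) => x₀ + (r:ℝ)
    | Sum.inr (Sum.inr (Sum.inl _)) => x₀ + 1
    | Sum.inr (Sum.inr (Sum.inr _)) => (x₀^2 - (r:ℝ))/x₀ with hy
  have hy0 : y ≠ 0 := by
    intro h
    have := congrFun h (Sum.inr (Sum.inl ()))
    simp only [hy, Pi.zero_apply] at this
    linarith
  have hx₀ne : x₀ ≠ 0 := hx₀pos.ne'
  have hye : adjMat (G4 r t) *ᵥ y = x₀ • y := by
    funext v
    have hsum1 : (∑ _i : Fin r, (x₀ + 1)) = (r:ℝ) * (x₀ + 1) := by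
      rw [Finset.sum_const, Finset.card_univ, Fintype.card_fin, nsmul_eq_mul]
    have hsum2 : (∑ _j : Fin t, (x₀^2 - (r:ℝ))/x₀) = (t:ℝ) * ((x₀^2 - (r:ℝ))/x₀) := by
      rw [Finset.sum_const, Finset.card_univ, Fintype.card_fin, nsmul_eq_mul]
    rcases v with _ | (_ | (i | j))
    · rw [AuxG4.row1]
      simp only [hy, Pi.smul_apply, smul_eq_mul]
      rw [hsum1, hsum2]
      field_simp
      linear_combination -hx₀F
    · rw [AuxG4.row2]
      simp only [hy, Pi.smul_apply, smul_eq_mul]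
      rw [hsum1]; ring
    · rw [AuxG4.row3]
      simp only [hy, Pi.smul_apply, smul_eq_mul]; ring
    · rw [AuxG4.row4]
      simp only [hy, Pi.smul_apply, smul_eq_mul]
      field_simp
  have hx₀ρ : x₀ ≤ ρ := hmax x₀ ⟨y, hy0, hye⟩
  have hρpos : 0 < ρ := lt_of_lt_of_le hx₀pos hx₀ρ
  -- equations for the ρ-eigenvector
  set a := x (Sum.inl ()) with ha
  set b := x (Sum.inr (Sum.inl ())) with hb
  set S := ∑ i, x (Sum.inr (Sum.inr (Sum.inl i))) with hSdef
  set T := ∑ j, x (Sum.inr (Sum.inr (Sum.inr j))) with hTdef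
  have h1 : b + S + T = ρ * a := by
    have := congrFun hxe (Sum.inl ())
    rw [AuxG4.row1] at this
    simpa using this
  have h2 : a + S = ρ * b := by
    have := congrFun hxe (Sum.inr (Sum.inl ()))
    rw [AuxG4.row2] at this
    simpa using this
  have h3 : ∀ i : Fin r, a + b = ρ * x (Sum.inr (Sum.inr (Sum.inl i))) := by
    intro i
    have := congrFun hxe (Sum.inr (Sum.inr (Sum.inl i)))
    rw [AuxG4.row3] at this
    simpa using this
  have h4 : ∀ j : Fin t, a = ρ * x (Sum.inr (Sum.inr (Sum.inr j))) := by
    intro j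
    have := congrFun hxe (Sum.inr (Sum.inr (Sum.inr j)))
    rw [AuxG4.row4] at this
    simpa using this
  have hS : ρ * S = (r:ℝ) * (a + b) := by
    rw [hSdef, Finset.mul_sum]
    simp only [← h3]
    rw [Finset.sum_const, Finset.card_univ, Fintype.card_fin, nsmul_eq_mul]
  have hT : ρ * T = (t:ℝ) * a := by
    rw [hTdef, Finset.mul_sum]
    simp only [← h4]
    rw [Finset.sum_const, Finset.card_univ, Fintype.card_fin, nsmul_eq_mul]
  have hab : a ≠ 0 ∨ b ≠ 0 := by
    by_contra hc
    push_neg at hc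
    obtain ⟨ha0, hb0⟩ := hc
    apply hx0
    funext v
    rcases v with _ | (_ | (i | j))
    · exact ha0
    · exact hb0
    · have := h3 i
      rw [ha0, hb0] at this
      simp only [Pi.zero_apply]
      rcases (mul_eq_zero.mp (by linarith : ρ * x (Sum.inr (Sum.inr (Sum.inl i))) = 0)) with h | h
      · exact absurd h hρpos.ne'
      · exact h
    · have := h4 j
      rw [ha0] at this
      simp only [Pi.zero_apply]
      rcases (mul_eq_zero.mp (by linarith : ρ * x (Sum.inr (Sum.inr (Sum.inr j))) = 0)) with h | h
      · exact absurd h hρpos.ne'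
      · exact h
  have E1 : ρ^2*a = ρ*b + (r:ℝ)*(a+b) + (t:ℝ)*a := by
    linear_combination (-ρ) * h1 + hS + hT
  have E2 : ρ^2*b = ρ*a + (r:ℝ)*(a+b) := by
    linear_combination (-ρ) * h2 + hS
  have hFρ : F ρ = 0 := by
    rcases hab with h | h
    · have hza : F ρ * a = 0 := by
        simp only [hF]
        linear_combination (ρ^2 - (r:ℝ)) * E1 + (ρ + (r:ℝ)) * E2
      exact (mul_eq_zero.mp hza).resolve_right h
    · have hzb : F ρ * b = 0 := by
        simp only [hF]
        linear_combination (ρ + (r:ℝ)) * E1 + (ρ^2 - (r:ℝ) - (t:ℝ)) * E2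
      exact (mul_eq_zero.mp hzb).resolve_right h
  have hρx₀ : ρ ≤ x₀ := le_csSup hRbdd hFρ
  constructor
  · linear_combination hFρ
  · intro z hz
    have hzx₀ : x₀ < z := lt_of_le_of_lt hx₀ρ hz
    have hFz : 0 < F z := by
      by_contra hc
      push_neg at hc
      set Y := max z B with hY
      have hFY : 0 < F Y := hbig Y (le_max_right _ _)
      obtain ⟨w, hw, hw0⟩ := intermediate_value_Icc (le_max_left z B)
        hFcont.continuousOn ⟨hc, hFY.le⟩
      have : w ≤ x₀ := le_csSup hRbdd hw0
      linarith [hw.1]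
    simp only [hF] at hFz
    nlinarith [hFz]
end

section
/- Every connected graph on at least 2 vertices that contains no path on 5 vertices as a subgraph and no cycle of length 4 as a subgraph is either a tree of diameter at most 3 (i.e., a star K_{1,r} with r ≥ 1 or a double star D_{a,b}), or the graph S^1_{r+1} obtained from a star K_{1,r} (r ≥ 2) by adding one edge between two leaves. -/
open Matrix SimpleGraph

/-- The star `K_{1,r}` with centre `0`. -/
def starG (r : ℕ) : SimpleGraph (Fin (r + 1)) :=
  SimpleGraph.fromRel (fun x _ => x = 0)

/-- `S¹_{r+1}`: the star `K_{1,r}` together with one extra edge joining the leaves `1`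
and `2` (for `r ≥ 2`; for `r = 2` this is a triangle). -/
def S1G (r : ℕ) : SimpleGraph (Fin (r + 1)) :=
  SimpleGraph.fromRel (fun x y => x = 0 ∨ (x = 1 ∧ y = 2))

/-- The double star `D_{a,b}`: the centres `Sum.inl ()` and `Sum.inr (Sum.inl ())` are
adjacent, the first centre has `a` pendant leaves, the second has `b` pendant leaves. -/
def doubleStarG (a b : ℕ) : SimpleGraph (Unit ⊕ Unit ⊕ Fin a ⊕ Fin b) :=
  SimpleGraph.fromRel (fun x y =>
    (x = Sum.inl () ∧ (y = Sum.inr (Sum.inl ()) ∨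
        ∃ i : Fin a, y = Sum.inr (Sum.inr (Sum.inl i)))) ∨
    (x = Sum.inr (Sum.inl ()) ∧ ∃ j : Fin b, y = Sum.inr (Sum.inr (Sum.inr j))))

/-- The cycle `C₄` on four vertices. -/
def C4G : SimpleGraph (Fin 4) :=
  SimpleGraph.fromEdgeSet {s(0,1), s(1,2), s(2,3), s(3,0)}

/-- The theta graph `θ(1,2,2)`, i.e. `K₄` minus one edge. -/
def theta122G : SimpleGraph (Fin 4) :=
  SimpleGraph.fromEdgeSet {s(0,1), s(1,2), s(2,3), s(3,0), s(0,2)}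

set_option maxHeartbeats 1000000

section
lemma noP5 {V : Type} {G : SimpleGraph V} (hP5 : ¬ ContainsSub (SimpleGraph.pathGraph 5) G)
    {a b c d e : V} (hab : G.Adj a b) (hbc : G.Adj b c) (hcd : G.Adj c d) (hde : G.Adj d e)
    (hac : a ≠ c) (had : a ≠ d) (hae : a ≠ e) (hbd : b ≠ d) (hbe : b ≠ e) (hce : c ≠ e) :
    False := by
  have hab' := hab.ne; have hbc' := hbc.ne; have hcd' := hcd.ne; have hde' := hde.ne
  apply hP5
  have hmap : ∀ u v : Fin 5, (pathGraph 5).Adj u v →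
      G.Adj (![a,b,c,d,e] u) (![a,b,c,d,e] v) := by
    intro u v huv
    rw [SimpleGraph.pathGraph_adj] at huv
    fin_cases u <;> fin_cases v <;> simp_all <;>
      solve_by_elim [hab, hbc, hcd, hde, SimpleGraph.Adj.symm]
  have hinj : Function.Injective ![a,b,c,d,e] := by
    intro u v h
    fin_cases u <;> fin_cases v <;> simp_all
  exact ⟨⟨![a,b,c,d,e], fun h => hmap _ _ h⟩, hinj⟩

lemma noC4 {V : Type} {G : SimpleGraph V} (hC4 : ¬ ContainsSub C4G G) {a b c d : V}
    (hab : G.Adj a b) (hbc : G.Adj b c) (hcd : G.Adj c d) (hda : G.Adj d a)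
    (hac : a ≠ c) (hbd : b ≠ d) : False := by
  have hab' := hab.ne; have hbc' := hbc.ne; have hcd' := hcd.ne; have hda' := hda.ne
  apply hC4
  have hmap : ∀ u v : Fin 4, C4G.Adj u v → G.Adj (![a,b,c,d] u) (![a,b,c,d] v) := by
    intro u v huv
    simp only [C4G, SimpleGraph.fromEdgeSet_adj, Set.mem_insert_iff, Set.mem_singleton_iff] at huv
    fin_cases u <;> fin_cases v <;> simp_all [Sym2.eq, Sym2.rel_iff'] <;>
      solve_by_elim [hab, hbc, hcd, hda, SimpleGraph.Adj.symm]
  have hinj : Function.Injective ![a,b,c,d] := by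
    intro u v h
    fin_cases u <;> fin_cases v <;> simp_all
  exact ⟨⟨![a,b,c,d], fun h => hmap _ _ h⟩, hinj⟩

lemma dominating {V : Type} {G : SimpleGraph V} {S : V → Prop} {b0 : V} (hb0 : S b0)
    (hconn : G.Connected)
    (key : ∀ u w, ¬ S u → ¬ S w → G.Adj w u → (∃ s, S s ∧ G.Adj u s) → False) (w : V) :
    S w ∨ ∃ s, S s ∧ G.Adj w s := by
  have main : ∀ {x y : V} (p : G.Walk x y), S y → S x ∨ ∃ s, S s ∧ G.Adj x s := by
    intro x y p
    induction p with
    | nil => exact fun h => Or.inl h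
    | @cons x' u' _ h p ih =>
      intro hy
      rcases ih hy with hu | hu
      · exact Or.inr ⟨u', hu, h⟩
      · by_cases hx : S x'
        · exact Or.inl hx
        · by_cases hu' : S u'
          · exact Or.inr ⟨u', hu', h⟩
          · exact (key u' x' hu' hx h hu).elim
  exact (hconn.preconnected w b0).elim fun p => main p hb0

lemma star_builder {V : Type} [Fintype V] (G : SimpleGraph V) (c : V)
    (hcard : 2 ≤ Fintype.card V)
    (hchar : ∀ u v, G.Adj u v ↔ (u ≠ v ∧ (u = c ∨ v = c))) :
    ∃ r : ℕ, 1 ≤ r ∧ Nonempty (G ≃g starG r) := by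
  obtain ⟨r, hr⟩ : ∃ r, Fintype.card V = r + 1 := ⟨Fintype.card V - 1, by omega⟩
  refine ⟨r, by omega, ?_⟩
  classical
  have e0 : V ≃ Fin (r + 1) := Fintype.equivFinOfCardEq hr
  set e := e0.trans (Equiv.swap (e0 c) 0) with he
  have hec : e c = 0 := by simp [he]
  have h0 : ∀ w, e w = 0 ↔ w = c := by
    intro w; rw [← hec]; exact e.apply_eq_iff_eq
  refine ⟨⟨e, @fun u v => ?_⟩⟩
  rw [hchar]
  simp only [starG, SimpleGraph.fromRel_adj, ne_eq, h0, EmbeddingLike.apply_eq_iff_eq]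

lemma S1_builder {V : Type} [Fintype V] (G : SimpleGraph V) (c x y : V)
    (hcx : c ≠ x) (hcy : c ≠ y) (hxy : x ≠ y)
    (hchar : ∀ u v, G.Adj u v ↔ u ≠ v ∧ (u = c ∨ v = c ∨ (u = x ∧ v = y) ∨ (u = y ∧ v = x))) :
    ∃ r : ℕ, 2 ≤ r ∧ Nonempty (G ≃g S1G r) := by
  classical
  have h3 : 3 ≤ Fintype.card V := by
    have hsub : ({c, x, y} : Finset V).card = 3 :=
      Finset.card_eq_three.mpr ⟨c, x, y, hcx, hcy, hxy, rfl⟩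
    calc 3 = ({c, x, y} : Finset V).card := hsub.symm
      _ ≤ Fintype.card V := Finset.card_le_univ _
  obtain ⟨s, hs⟩ : ∃ s, Fintype.card V = s + 2 + 1 := ⟨Fintype.card V - 3, by omega⟩
  refine ⟨s + 2, by omega, ?_⟩
  have h01 : (0 : Fin (s+2+1)) ≠ 1 := by simp [Fin.ext_iff]
  have h02 : (0 : Fin (s+2+1)) ≠ 2 := by simp [Fin.ext_iff]; rw [Nat.mod_eq_of_lt (by omega)]; omega
  have h12 : (1 : Fin (s+2+1)) ≠ 2 := by simp [Fin.ext_iff]; rw [Nat.mod_eq_of_lt (by omega)]; omega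
  have e0 : V ≃ Fin (s + 2 + 1) := Fintype.equivFinOfCardEq hs
  set e1 := e0.trans (Equiv.swap (e0 c) 0) with he1
  have he1c : e1 c = 0 := by simp [he1]
  set e2 := e1.trans (Equiv.swap (e1 x) 1) with he2
  have he1x0 : e1 x ≠ 0 := by
    rw [← he1c]; exact fun h => hcx (e1.injective h).symm
  have he2c : e2 c = 0 := by
    simp only [he2, Equiv.trans_apply, he1c]
    exact Equiv.swap_apply_of_ne_of_ne (Ne.symm he1x0) h01
  have he2x : e2 x = 1 := by simp [he2]
  have he2y1 : e2 y ≠ 1 := by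
    rw [← he2x]; exact fun h => hxy (e2.injective h).symm
  have he2y0 : e2 y ≠ 0 := by
    rw [← he2c]; exact fun h => hcy (e2.injective h).symm
  set e3 := e2.trans (Equiv.swap (e2 y) 2) with he3
  have he3c : e3 c = 0 := by
    simp only [he3, Equiv.trans_apply, he2c]
    exact Equiv.swap_apply_of_ne_of_ne (Ne.symm he2y0) h02
  have he3x : e3 x = 1 := by
    simp only [he3, Equiv.trans_apply, he2x]
    exact Equiv.swap_apply_of_ne_of_ne (Ne.symm he2y1) h12
  have he3y : e3 y = 2 := by simp [he3]
  have f0 : ∀ w, e3 w = 0 ↔ w = c := by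
    intro w; rw [← he3c]; exact e3.apply_eq_iff_eq
  have f1 : ∀ w, e3 w = 1 ↔ w = x := by
    intro w; rw [← he3x]; exact e3.apply_eq_iff_eq
  have f2 : ∀ w, e3 w = 2 ↔ w = y := by
    intro w; rw [← he3y]; exact e3.apply_eq_iff_eq
  refine ⟨⟨e3, @fun u v => ?_⟩⟩
  rw [hchar]
  simp only [S1G, SimpleGraph.fromRel_adj, ne_eq, f0, f1, f2, EmbeddingLike.apply_eq_iff_eq]
  tauto

lemma doubleStar_builder {V : Type} [Fintype V] (G : SimpleGraph V) (p q : V)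
    (hpq : G.Adj p q)
    (hcover : ∀ w, w = p ∨ w = q ∨ G.Adj p w ∨ G.Adj q w)
    (hedges : ∀ x y, G.Adj x y → x = p ∨ x = q ∨ y = p ∨ y = q)
    (hnb : ∀ w, G.Adj p w → G.Adj q w → False)
    (hA : ∃ w, G.Adj p w ∧ w ≠ q) (hB : ∃ w, G.Adj q w ∧ w ≠ p) :
    ∃ a b : ℕ, 1 ≤ a ∧ 1 ≤ b ∧ Nonempty (G ≃g doubleStarG a b) := by
  classical
  obtain ⟨wA, hwA⟩ := hA
  obtain ⟨wB, hwB⟩ := hB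
  refine ⟨Fintype.card {w : V // G.Adj p w ∧ w ≠ q},
    Fintype.card {w : V // G.Adj q w ∧ w ≠ p},
    Fintype.card_pos_iff.mpr ⟨⟨wA, hwA⟩⟩, Fintype.card_pos_iff.mpr ⟨⟨wB, hwB⟩⟩, ?_⟩
  obtain ⟨eA⟩ : Nonempty (Fin (Fintype.card {w : V // G.Adj p w ∧ w ≠ q}) ≃
      {w : V // G.Adj p w ∧ w ≠ q}) := ⟨(Fintype.equivFin _).symm⟩
  obtain ⟨eB⟩ : Nonempty (Fin (Fintype.card {w : V // G.Adj q w ∧ w ≠ p}) ≃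
      {w : V // G.Adj q w ∧ w ≠ p}) := ⟨(Fintype.equivFin _).symm⟩
  set g : Unit ⊕ Unit ⊕ Fin (Fintype.card {w : V // G.Adj p w ∧ w ≠ q}) ⊕
      Fin (Fintype.card {w : V // G.Adj q w ∧ w ≠ p}) → V :=
    Sum.elim (fun _ => p) (Sum.elim (fun _ => q)
      (Sum.elim (fun i => (eA i).1) (fun j => (eB j).1))) with hg
  have hApne : ∀ i, (eA i).1 ≠ p := fun i => ((eA i).2.1).ne'
  have hAqne : ∀ i, (eA i).1 ≠ q := fun i => (eA i).2.2
  have hBqne : ∀ j, (eB j).1 ≠ q := fun j => ((eB j).2.1).ne'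
  have hBpne : ∀ j, (eB j).1 ≠ p := fun j => (eB j).2.2
  have hAB : ∀ i j, (eA i).1 ≠ (eB j).1 := by
    intro i j h
    exact hnb _ ((eA i).2.1) (h ▸ (eB j).2.1)
  have hpA : ∀ i, G.Adj p (eA i).1 := fun i => (eA i).2.1
  have hqB : ∀ j, G.Adj q (eB j).1 := fun j => (eB j).2.1
  have hqA : ∀ i, ¬ G.Adj q (eA i).1 := fun i h => hnb _ (hpA i) h
  have hpB : ∀ j, ¬ G.Adj p (eB j).1 := fun j h => hnb _ h (hqB j)
  have hAA : ∀ i i', ¬ G.Adj (eA i).1 (eA i').1 := by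
    intro i i' h
    rcases hedges _ _ h with h' | h' | h' | h'
    exacts [hApne i h', hAqne i h', hApne i' h', hAqne i' h']
  have hBB : ∀ j j', ¬ G.Adj (eB j).1 (eB j').1 := by
    intro j j' h
    rcases hedges _ _ h with h' | h' | h' | h'
    exacts [hBpne j h', hBqne j h', hBpne j' h', hBqne j' h']
  have hABadj : ∀ i j, ¬ G.Adj (eA i).1 (eB j).1 := by
    intro i j h
    rcases hedges _ _ h with h' | h' | h' | h'
    exacts [hApne i h', hAqne i h', hBpne j h', hBqne j h']
  have hBAadj : ∀ j i, ¬ G.Adj (eB j).1 (eA i).1 := fun j i h => hABadj i j h.symm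
  have hginj : Function.Injective g := by
    intro s t h
    rcases s with ⟨⟩ | ⟨⟩ | i | j <;> rcases t with ⟨⟩ | ⟨⟩ | i' | j' <;>
      simp only [hg, Sum.elim_inl, Sum.elim_inr] at h <;>
      first
      | rfl
      | exact absurd h hpq.ne
      | exact absurd h hpq.ne.symm
      | exact absurd h (hApne _).symm
      | exact absurd h (hApne _)
      | exact absurd h (hBpne _).symm
      | exact absurd h (hBpne _)
      | exact absurd h (hAqne _).symm
      | exact absurd h (hAqne _)
      | exact absurd h (hBqne _).symm
      | exact absurd h (hBqne _)
      | exact absurd h (hAB _ _)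
      | exact absurd h (hAB _ _).symm
      | exact congrArg _ (congrArg _ (congrArg _ (eA.injective (Subtype.ext h))))
      | exact congrArg _ (congrArg _ (congrArg _ (eB.injective (Subtype.ext h))))
  have hgsur : Function.Surjective g := by
    intro w
    rcases hcover w with rfl | rfl | hpw | hqw
    · exact ⟨.inl (), by simp [hg]⟩
    · exact ⟨.inr (.inl ()), by simp [hg]⟩
    · by_cases hq : w = q
      · exact ⟨.inr (.inl ()), by simp [hg, hq]⟩
      · exact ⟨.inr (.inr (.inl (eA.symm ⟨w, hpw, hq⟩))), by simp [hg]⟩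
    · by_cases hp : w = p
      · exact ⟨.inl (), by simp [hg, hp]⟩
      · exact ⟨.inr (.inr (.inr (eB.symm ⟨w, hqw, hp⟩))), by simp [hg]⟩
  have hbij : Function.Bijective g := ⟨hginj, hgsur⟩
  have hpp : ¬ G.Adj p p := fun h => G.irrefl h
  have hqq : ¬ G.Adj q q := fun h => G.irrefl h
  have hAp : ∀ i, G.Adj (eA i).1 p := fun i => (hpA i).symm
  have hBq : ∀ j, G.Adj (eB j).1 q := fun j => (hqB j).symm
  have hAq : ∀ i, ¬ G.Adj (eA i).1 q := fun i h => hqA i h.symm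
  have hBp : ∀ j, ¬ G.Adj (eB j).1 p := fun j h => hpB j h.symm
  have hadj : ∀ s t, (doubleStarG _ _).Adj s t ↔ G.Adj (g s) (g t) := by
    intro s t
    rcases s with ⟨⟩ | ⟨⟩ | i | j <;> rcases t with ⟨⟩ | ⟨⟩ | i' | j' <;>
      simp only [hg, Sum.elim_inl, Sum.elim_inr] <;>
      simp [doubleStarG, SimpleGraph.fromRel_adj, hpq, hpq.symm, hpA, hqB,
        hqA, hpB, hAA, hBB, hABadj, hBAadj, hAp, hBq, hAq, hBp, hpp, hqq]
  have hgE : ∀ w, g ((Equiv.ofBijective g hbij).symm w) = w :=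
    fun w => Equiv.ofBijective_apply_symm_apply g hbij w
  exact ⟨⟨(Equiv.ofBijective g hbij).symm, @fun u v => by rw [hadj, hgE, hgE]⟩⟩

end

/-- a connected graph on at least two vertices containing neither `P₅` nor
`C₄` as a subgraph is a star `K_{1,r}` (`r ≥ 1`), a double star `D_{a,b}` (`a,b ≥ 1`),
or `S¹_{r+1}` (`r ≥ 2`). -/
theorem P5_C4_free_structure {V : Type} [Fintype V] (G : SimpleGraph V)
    (hcard : 2 ≤ Fintype.card V) (hconn : G.Connected)
    (hP5 : ¬ ContainsSub (SimpleGraph.pathGraph 5) G)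
    (hC4 : ¬ ContainsSub C4G G) :
    (∃ r : ℕ, 1 ≤ r ∧ Nonempty (G ≃g starG r)) ∨
    (∃ a b : ℕ, 1 ≤ a ∧ 1 ≤ b ∧ Nonempty (G ≃g doubleStarG a b)) ∨
    (∃ r : ℕ, 2 ≤ r ∧ Nonempty (G ≃g S1G r)) := by
  classical
  by_cases htri : ∃ x y z : V, G.Adj x y ∧ G.Adj y z ∧ G.Adj x z
  · right; right
    obtain ⟨x, y, z, hxy, hyz, hxz⟩ := htri
    have tri_pend : ∀ a b c u t : V, G.Adj a b → G.Adj b c → G.Adj a c →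
        u ≠ a → u ≠ b → u ≠ c → G.Adj u a → G.Adj u t → t = a := by
      intro a b c u t hab hbc hac hua hub huc hu ht
      by_contra hta
      by_cases htb : t = b
      · subst htb
        exact noC4 hC4 hu hac hbc.symm ht.symm huc hab.ne
      · by_cases htc : t = c
        · subst htc
          exact noC4 hC4 hu hab hbc ht.symm hub hac.ne
        · exact noP5 hP5 ht.symm hu hab hbc hta htb htc hub huc hac.ne
    set S : V → Prop := fun w => w = x ∨ w = y ∨ w = z with hSdef
    have hS : ∀ w, S w ↔ (w = x ∨ w = y ∨ w = z) := fun w => Iff.rfl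
    have key : ∀ u w, ¬ S u → ¬ S w → G.Adj w u → (∃ s, S s ∧ G.Adj u s) → False := by
      intro u w hu hw hadj hex
      obtain ⟨s, hs, hus⟩ := hex
      have hu1 : u ≠ x := fun h => hu ((hS u).mpr (Or.inl h))
      have hu2 : u ≠ y := fun h => hu ((hS u).mpr (Or.inr (Or.inl h)))
      have hu3 : u ≠ z := fun h => hu ((hS u).mpr (Or.inr (Or.inr h)))
      rcases (hS s).mp hs with hs1 | hs1 | hs1
      · exact hw ((hS w).mpr (Or.inl
          (tri_pend x y z u w hxy hyz hxz hu1 hu2 hu3 (hs1 ▸ hus) hadj.symm)))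
      · exact hw ((hS w).mpr (Or.inr (Or.inl
          (tri_pend y x z u w hxy.symm hxz hyz hu2 hu1 hu3 (hs1 ▸ hus) hadj.symm))))
      · exact hw ((hS w).mpr (Or.inr (Or.inr
          (tri_pend z x y u w hxz.symm hxy hyz.symm hu3 hu1 hu2 (hs1 ▸ hus) hadj.symm))))
    have dom : ∀ w, S w ∨ ∃ s, S s ∧ G.Adj w s :=
      fun w => dominating ((hS x).mpr (Or.inl rfl)) hconn key w
    have houts_gen : ∀ c d e u0 : V, G.Adj c d → G.Adj d e → G.Adj c e →
        (∀ w, S w ↔ (w = c ∨ w = d ∨ w = e)) → ¬ S u0 → G.Adj u0 c →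
        ∀ w, ¬ S w → G.Adj w c := by
      intro c d e u0 hcd hde hce hSmem hu0 hu0c w hw
      have hu0d : u0 ≠ d := fun h => hu0 ((hSmem u0).mpr (Or.inr (Or.inl h)))
      have hu0e : u0 ≠ e := fun h => hu0 ((hSmem u0).mpr (Or.inr (Or.inr h)))
      have hw1 : w ≠ c := fun h => hw ((hSmem w).mpr (Or.inl h))
      have hw2 : w ≠ d := fun h => hw ((hSmem w).mpr (Or.inr (Or.inl h)))
      have hw3 : w ≠ e := fun h => hw ((hSmem w).mpr (Or.inr (Or.inr h)))
      rcases dom w with h | ⟨s, hs, hws⟩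
      · exact absurd h hw
      rcases (hSmem s).mp hs with hs1 | hs1 | hs1
      · exact hs1 ▸ hws
      · by_cases hwu0 : w = u0
        · exact absurd (tri_pend c d e w d hcd hde hce hw1 hw2 hw3
            (by rw [hwu0]; exact hu0c) (hs1 ▸ hws)) hcd.ne'
        · exact (noP5 hP5 hu0c hce hde.symm (hs1 ▸ hws).symm hu0e hu0d (Ne.symm hwu0)
            hcd.ne (Ne.symm hw1) (Ne.symm hw3)).elim
      · by_cases hwu0 : w = u0
        · exact absurd (tri_pend c d e w e hcd hde hce hw1 hw2 hw3
            (by rw [hwu0]; exact hu0c) (hs1 ▸ hws)) hce.ne'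
        · exact (noP5 hP5 hu0c hcd hde (hs1 ▸ hws).symm hu0d hu0e (Ne.symm hwu0)
            hce.ne (Ne.symm hw1) (Ne.symm hw2)).elim
    have finS1 : ∀ c d e : V, G.Adj c d → G.Adj d e → G.Adj c e →
        (∀ w, S w ↔ (w = c ∨ w = d ∨ w = e)) →
        (∀ w, ¬ S w → G.Adj w c) →
        ∃ r, 2 ≤ r ∧ Nonempty (G ≃g S1G r) := by
      intro c d e hcd hde hce hSmem houts
      have hpendN : ∀ w, ¬ S w → ∀ t, G.Adj w t → t = c := by
        intro w hw t hwt
        have h1 : w ≠ c := fun h => hw ((hSmem w).mpr (Or.inl h))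
        have h2 : w ≠ d := fun h => hw ((hSmem w).mpr (Or.inr (Or.inl h)))
        have h3 : w ≠ e := fun h => hw ((hSmem w).mpr (Or.inr (Or.inr h)))
        exact tri_pend c d e w t hcd hde hce h1 h2 h3 (houts w hw) hwt
      apply S1_builder G c d e hcd.ne hce.ne hde.ne
      intro u v
      constructor
      · intro huv
        refine ⟨huv.ne, ?_⟩
        by_cases hu : S u
        · rcases (hSmem u).mp hu with rfl | rfl | rfl
          · exact Or.inl rfl
          · by_cases hv : S v
            · rcases (hSmem v).mp hv with rfl | rfl | rfl
              · exact Or.inr (Or.inl rfl)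
              · exact (G.irrefl huv).elim
              · exact Or.inr (Or.inr (Or.inl ⟨rfl, rfl⟩))
            · exact absurd (hpendN v hv _ huv.symm) hcd.ne'
          · by_cases hv : S v
            · rcases (hSmem v).mp hv with rfl | rfl | rfl
              · exact Or.inr (Or.inl rfl)
              · exact Or.inr (Or.inr (Or.inr ⟨rfl, rfl⟩))
              · exact (G.irrefl huv).elim
            · exact absurd (hpendN v hv _ huv.symm) hce.ne'
        · exact Or.inr (Or.inl (hpendN u hu v huv))
      · rintro ⟨hne, rfl | rfl | ⟨rfl, rfl⟩ | ⟨rfl, rfl⟩⟩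
        · by_cases hv : S v
          · rcases (hSmem v).mp hv with rfl | rfl | rfl
            · exact absurd rfl hne
            · exact hcd
            · exact hce
          · exact (houts v hv).symm
        · by_cases hu : S u
          · rcases (hSmem u).mp hu with rfl | rfl | rfl
            · exact absurd rfl hne
            · exact hcd.symm
            · exact hce.symm
          · exact houts u hu
        · exact hde
        · exact hde.symm
    by_cases hpend : ∃ u, ¬ S u
    · obtain ⟨u0, hu0⟩ := hpend
      rcases dom u0 with h | ⟨s, hs, hu0s⟩
      · exact absurd h hu0
      rcases (hS s).mp hs with hs1 | hs1 | hs1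
      · exact finS1 x y z hxy hyz hxz hS
          (houts_gen x y z u0 hxy hyz hxz hS hu0 (hs1 ▸ hu0s))
      · have hSmem : ∀ w, S w ↔ (w = y ∨ w = x ∨ w = z) := by
          intro w; rw [hS]; tauto
        exact finS1 y x z hxy.symm hxz hyz hSmem
          (houts_gen y x z u0 hxy.symm hxz hyz hSmem hu0 (hs1 ▸ hu0s))
      · have hSmem : ∀ w, S w ↔ (w = z ∨ w = x ∨ w = y) := by
          intro w; rw [hS]; tauto
        exact finS1 z x y hxz.symm hxy hyz.symm hSmem
          (houts_gen z x y u0 hxz.symm hxy hyz.symm hSmem hu0 (hs1 ▸ hu0s))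
    · push_neg at hpend
      apply S1_builder G x y z hxy.ne hxz.ne hyz.ne
      intro u v
      rcases (hS u).mp (hpend u) with hs1 | hs1 | hs1 <;>
        rcases (hS v).mp (hpend v) with hs2 | hs2 | hs2 <;> subst hs1 <;> subst hs2 <;>
        simp [hxy, hyz, hxz, hxy.symm, hyz.symm, hxz.symm, hxy.ne, hxz.ne, hyz.ne,
          hxy.ne', hxz.ne', hyz.ne', SimpleGraph.irrefl]
  · have hnt : ∀ a b c : V, G.Adj a b → G.Adj b c → G.Adj a c → False :=
      fun a b c h1 h2 h3 => htri ⟨a, b, c, h1, h2, h3⟩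
    have hedge : ∃ u v : V, G.Adj u v := by
      obtain ⟨u, v, huvne⟩ := Fintype.exists_pair_of_one_lt_card (α := V) (by omega)
      obtain ⟨p⟩ := hconn.preconnected u v
      cases p with
      | nil => exact absurd rfl huvne
      | cons h _ => exact ⟨_, _, h⟩
    obtain ⟨u, v, huv⟩ := hedge
    by_cases hP4 : ∃ a b c d : V, G.Adj a b ∧ G.Adj b c ∧ G.Adj c d ∧ a ≠ c ∧ a ≠ d ∧ b ≠ d
    · right; left
      obtain ⟨a, b, c, d, hab, hbc, hcd, hac, had, hbd⟩ := hP4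
      have h1 : ¬ G.Adj a c := fun h => hnt a b c hab hbc h
      have h2 : ¬ G.Adj b d := fun h => hnt b c d hbc hcd h
      have h3 : ¬ G.Adj a d := fun h => noC4 hC4 hab hbc hcd h.symm hac hbd
      have nbrA : ∀ w, w ≠ a → w ≠ b → w ≠ c → w ≠ d → ¬ G.Adj w a := by
        intro w w1 w2 w3 w4 h
        exact noP5 hP5 h hab hbc hcd w2 w3 w4 hac had hbd
      have nbrD : ∀ w, w ≠ a → w ≠ b → w ≠ c → w ≠ d → ¬ G.Adj w d := by
        intro w w1 w2 w3 w4 h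
        exact noP5 hP5 h hcd.symm hbc.symm hab.symm w3 w2 w1 hbd.symm had.symm hac.symm
      have nb : ∀ w, G.Adj b w → G.Adj c w → False := fun w hbw hcw => hnt b c w hbc hcw hbw
      have pendB : ∀ w, w ≠ a → w ≠ b → w ≠ c → w ≠ d → G.Adj w b → ∀ t, G.Adj w t → t = b := by
        intro w w1 w2 w3 w4 hwb t hwt
        by_contra htb
        by_cases h4 : t = a
        · exact nbrA w w1 w2 w3 w4 (h4 ▸ hwt)
        · by_cases h5 : t = c
          · exact nb w hwb.symm (h5 ▸ hwt).symm
          · by_cases h6 : t = d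
            · exact noP5 hP5 hab hwb.symm (h6 ▸ hwt) hcd.symm (Ne.symm w1) had hac hbd hbc.ne w3
            · exact noP5 hP5 hwt.symm hwb hbc hcd htb h5 h6 w3 w4 hbd
      have pendC : ∀ w, w ≠ a → w ≠ b → w ≠ c → w ≠ d → G.Adj w c → ∀ t, G.Adj w t → t = c := by
        intro w w1 w2 w3 w4 hwc t hwt
        by_contra htc
        by_cases h4 : t = d
        · exact nbrD w w1 w2 w3 w4 (h4 ▸ hwt)
        · by_cases h5 : t = b
          · exact nb w (h5 ▸ hwt).symm hwc.symm
          · by_cases h6 : t = a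
            · exact noP5 hP5 hcd.symm hwc.symm (h6 ▸ hwt) hab (Ne.symm w4) had.symm
                hbd.symm hac.symm hbc.ne' w2
            · exact noP5 hP5 hwt.symm hwc hbc.symm hab.symm htc h5 h6 w2 w1 hac.symm
      set S : V → Prop := fun w => w = a ∨ w = b ∨ w = c ∨ w = d with hSdef
      have hS : ∀ w, S w ↔ (w = a ∨ w = b ∨ w = c ∨ w = d) := fun w => Iff.rfl
      have key : ∀ p' w, ¬ S p' → ¬ S w → G.Adj w p' → (∃ s, S s ∧ G.Adj p' s) → False := by
        intro p' w hp' hw hadj hex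
        obtain ⟨s, hs, hps⟩ := hex
        have p1 : p' ≠ a := fun h => hp' ((hS p').mpr (Or.inl h))
        have p2 : p' ≠ b := fun h => hp' ((hS p').mpr (Or.inr (Or.inl h)))
        have p3 : p' ≠ c := fun h => hp' ((hS p').mpr (Or.inr (Or.inr (Or.inl h))))
        have p4 : p' ≠ d := fun h => hp' ((hS p').mpr (Or.inr (Or.inr (Or.inr h))))
        rcases (hS s).mp hs with hs1 | hs1 | hs1 | hs1
        · exact nbrA p' p1 p2 p3 p4 (hs1 ▸ hps)
        · exact hw ((hS w).mpr (Or.inr (Or.inl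
            (pendB p' p1 p2 p3 p4 (hs1 ▸ hps) w hadj.symm))))
        · exact hw ((hS w).mpr (Or.inr (Or.inr (Or.inl
            (pendC p' p1 p2 p3 p4 (hs1 ▸ hps) w hadj.symm)))))
        · exact nbrD p' p1 p2 p3 p4 (hs1 ▸ hps)
      have dom : ∀ w, S w ∨ ∃ s, S s ∧ G.Adj w s :=
        fun w => dominating ((hS a).mpr (Or.inl rfl)) hconn key w
      apply doubleStar_builder G b c hbc
      · intro w
        by_cases hw : S w
        · rcases (hS w).mp hw with hs1 | hs1 | hs1 | hs1
          · exact Or.inr (Or.inr (Or.inl (hs1 ▸ hab.symm)))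
          · exact Or.inl hs1
          · exact Or.inr (Or.inl hs1)
          · exact Or.inr (Or.inr (Or.inr (hs1 ▸ hcd)))
        · have w1 : w ≠ a := fun h => hw ((hS w).mpr (Or.inl h))
          have w2 : w ≠ b := fun h => hw ((hS w).mpr (Or.inr (Or.inl h)))
          have w3 : w ≠ c := fun h => hw ((hS w).mpr (Or.inr (Or.inr (Or.inl h))))
          have w4 : w ≠ d := fun h => hw ((hS w).mpr (Or.inr (Or.inr (Or.inr h))))
          rcases dom w with h | ⟨s, hs, hws⟩
          · exact absurd h hw
          · rcases (hS s).mp hs with hs1 | hs1 | hs1 | hs1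
            · exact absurd (hs1 ▸ hws) (nbrA w w1 w2 w3 w4)
            · exact Or.inr (Or.inr (Or.inl (hs1 ▸ hws).symm))
            · exact Or.inr (Or.inr (Or.inr (hs1 ▸ hws).symm))
            · exact absurd (hs1 ▸ hws) (nbrD w w1 w2 w3 w4)
      · intro p' q' h
        by_cases hp' : S p'
        · rcases (hS p').mp hp' with hs1 | hs1 | hs1 | hs1
          · by_cases hq : q' = b
            · exact Or.inr (Or.inr (Or.inl hq))
            · exfalso
              have h' : G.Adj a q' := hs1 ▸ h
              by_cases hq2 : q' = c
              · exact h1 (hq2 ▸ h')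
              · by_cases hq3 : q' = d
                · exact h3 (hq3 ▸ h')
                · by_cases hq4 : q' = a
                  · exact G.irrefl (hq4 ▸ h')
                  · exact nbrA q' hq4 hq hq2 hq3 h'.symm
          · exact Or.inl hs1
          · exact Or.inr (Or.inl hs1)
          · by_cases hq : q' = c
            · exact Or.inr (Or.inr (Or.inr hq))
            · exfalso
              have h' : G.Adj d q' := hs1 ▸ h
              by_cases hq2 : q' = a
              · exact h3 ((hq2 ▸ h').symm)
              · by_cases hq3 : q' = b
                · exact h2 ((hq3 ▸ h').symm)
                · by_cases hq4 : q' = d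
                  · exact G.irrefl (hq4 ▸ h')
                  · exact nbrD q' hq2 hq3 hq hq4 h'.symm
        · have p1 : p' ≠ a := fun hh => hp' ((hS p').mpr (Or.inl hh))
          have p2 : p' ≠ b := fun hh => hp' ((hS p').mpr (Or.inr (Or.inl hh)))
          have p3 : p' ≠ c := fun hh => hp' ((hS p').mpr (Or.inr (Or.inr (Or.inl hh))))
          have p4 : p' ≠ d := fun hh => hp' ((hS p').mpr (Or.inr (Or.inr (Or.inr hh))))
          rcases dom p' with hp | ⟨s, hs, hps⟩
          · exact absurd hp hp'
          · rcases (hS s).mp hs with hs1 | hs1 | hs1 | hs1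
            · exact absurd (hs1 ▸ hps) (nbrA p' p1 p2 p3 p4)
            · exact Or.inr (Or.inr (Or.inl (pendB p' p1 p2 p3 p4 (hs1 ▸ hps) q' h)))
            · exact Or.inr (Or.inr (Or.inr (pendC p' p1 p2 p3 p4 (hs1 ▸ hps) q' h)))
            · exact absurd (hs1 ▸ hps) (nbrD p' p1 p2 p3 p4)
      · exact nb
      · exact ⟨a, hab.symm, hac⟩
      · exact ⟨d, hcd, hbd.symm⟩
    · left
      set S : V → Prop := fun w => w = u ∨ w = v with hSdef
      have hS : ∀ w, S w ↔ (w = u ∨ w = v) := fun w => Iff.rfl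
      have key : ∀ u' w, ¬ S u' → ¬ S w → G.Adj w u' → (∃ s, S s ∧ G.Adj u' s) → False := by
        intro u' w hu' hw hadj hex
        obtain ⟨s, hs, hus⟩ := hex
        have hw1 : w ≠ u := fun h => hw ((hS w).mpr (Or.inl h))
        have hw2 : w ≠ v := fun h => hw ((hS w).mpr (Or.inr h))
        have hu1 : u' ≠ u := fun h => hu' ((hS u').mpr (Or.inl h))
        have hu2 : u' ≠ v := fun h => hu' ((hS u').mpr (Or.inr h))
        rcases (hS s).mp hs with hs1 | hs1
        · exact hP4 ⟨w, u', u, v, hadj, hs1 ▸ hus, huv, hw1, hw2, hu2⟩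
        · exact hP4 ⟨w, u', v, u, hadj, hs1 ▸ hus, huv.symm, hw2, hw1, hu1⟩
      have dom : ∀ w, S w ∨ ∃ s, S s ∧ G.Adj w s :=
        fun w => dominating ((hS u).mpr (Or.inl rfl)) hconn key w
      have starfin : ∀ c l : V, G.Adj c l → (∀ w, w ≠ c → w ≠ l → G.Adj w c) →
          ∃ r, 1 ≤ r ∧ Nonempty (G ≃g starG r) := by
        intro c l hcl houts
        apply star_builder G c hcard
        intro a' b'
        constructor
        · intro h
          refine ⟨h.ne, ?_⟩
          by_cases hh1 : a' = c
          · exact Or.inl hh1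
          · by_cases hh2 : b' = c
            · exact Or.inr hh2
            · exfalso
              by_cases hh3 : a' = l
              · exact hnt b' c l (houts b' hh2 (hh3 ▸ h).ne') hcl (hh3 ▸ h).symm
              · by_cases hh4 : b' = l
                · exact hnt a' c l (houts a' hh1 hh3) hcl (hh4 ▸ h)
                · exact hP4 ⟨b', a', c, l, h.symm, houts a' hh1 hh3, hcl, hh2, hh4, hh3⟩
        · rintro ⟨hne, h1 | h1⟩
          · have hb'c : b' ≠ c := fun hh => hne (h1.trans hh.symm)
            rw [h1]
            by_cases hb : b' = l
            · rw [hb]; exact hcl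
            · exact (houts b' hb'c hb).symm
          · have ha'c : a' ≠ c := fun hh => hne (hh.trans h1.symm)
            rw [h1]
            by_cases ha : a' = l
            · rw [ha]; exact hcl.symm
            · exact houts a' ha'c ha
      by_cases hex : ∃ w, w ≠ u ∧ w ≠ v ∧ G.Adj w v
      · obtain ⟨w0, hw0u, hw0v, hw0⟩ := hex
        apply starfin v u huv.symm
        intro w hwv hwu
        rcases dom w with hw | ⟨s, hs, hws⟩
        · rcases (hS w).mp hw with hs1 | hs1
          · exact absurd hs1 hwu
          · exact absurd hs1 hwv
        · rcases (hS s).mp hs with hs1 | hs1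
          · by_cases hww0 : w = w0
            · exact (hnt w u v (hs1 ▸ hws) huv (by rw [hww0]; exact hw0)).elim
            · exact (hP4 ⟨w, u, v, w0, hs1 ▸ hws, huv, hw0.symm, hwv, hww0,
                Ne.symm hw0u⟩).elim
          · exact hs1 ▸ hws
      · apply starfin u v huv
        intro w hwu hwv
        rcases dom w with hw | ⟨s, hs, hws⟩
        · rcases (hS w).mp hw with hs1 | hs1
          · exact absurd hs1 hwu
          · exact absurd hs1 hwv
        · rcases (hS s).mp hs with hs1 | hs1
          · exact hs1 ▸ hws
          · exact (hex ⟨w, hwu, hwv, hs1 ▸ hws⟩).elim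
end

section
/- Every connected graph that contains no path on 5 vertices as a subgraph is one of: a graph with a 4-cycle as spanning subgraph (C_4, θ(1,2,2) = K_4 minus an edge, or K_4); the graph S^1_{r+1} for some r ≥ 2; a double star D_{a,b} with a,b ≥ 1; or a star K_{1,r} with r ≥ 0. -/
open Matrix SimpleGraph

/-! ### Auxiliary lemmas -/

section Helpers
variable {V : Type} {G : SimpleGraph V}

private def iso_of_equiv {W : Type} {H : SimpleGraph W} (g : W ≃ V)
    (h : ∀ i j, H.Adj i j ↔ G.Adj (g i) (g j)) : G ≃g H :=
  ⟨g.symm, by intro x y; rw [h]; simp⟩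

private lemma crossing {S : Set V} : ∀ {u v : V}, G.Walk u v → u ∈ S → v ∉ S →
    ∃ a b, a ∈ S ∧ b ∉ S ∧ G.Adj a b := by
  intro u v p
  induction p with
  | nil => intro h h'; exact absurd h h'
  | @cons u w v h p ih =>
    intro hu hv
    by_cases hw : w ∈ S
    · exact ih hw hv
    · exact ⟨u, w, hu, hw, h⟩

private lemma mkP5 {a b c d e : V} (hab : G.Adj a b) (hbc : G.Adj b c) (hcd : G.Adj c d)
    (hde : G.Adj d e) (hac : a ≠ c) (had : a ≠ d) (hae : a ≠ e) (hbd : b ≠ d)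
    (hbe : b ≠ e) (hce : c ≠ e) : ContainsSub (SimpleGraph.pathGraph 5) G := by
  have h1 := hab.ne; have h2 := hbc.ne; have h3 := hcd.ne; have h4 := hde.ne
  refine ⟨⟨![a,b,c,d,e], ?_⟩, ?_⟩
  · intro x y hxy
    rw [SimpleGraph.pathGraph_adj] at hxy
    fin_cases x <;> fin_cases y <;> simp_all [G.adj_comm]
  · intro x y hxy
    change ![a,b,c,d,e] x = ![a,b,c,d,e] y at hxy
    fin_cases x <;> fin_cases y <;> simp_all

private lemma bij4 (a b c d : V) (h1 : a ≠ b) (h2 : a ≠ c) (h3 : a ≠ d)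
    (h4 : b ≠ c) (h5 : b ≠ d) (h6 : c ≠ d)
    (hcov : ∀ v, v = a ∨ v = b ∨ v = c ∨ v = d) :
    Function.Bijective (![a,b,c,d] : Fin 4 → V) := by
  constructor
  · intro i j hij
    fin_cases i <;> fin_cases j <;> simp_all
  · intro v
    rcases hcov v with rfl | rfl | rfl | rfl
    exacts [⟨0, rfl⟩, ⟨1, rfl⟩, ⟨2, rfl⟩, ⟨3, rfl⟩]

private lemma star_case [Fintype V] (c : V)
    (hadj : ∀ u v, G.Adj u v ↔ u ≠ v ∧ (u = c ∨ v = c)) :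
    ∃ r : ℕ, Nonempty (G ≃g starG r) := by
  classical
  set r := Fintype.card {v : V // v ≠ c} with hr
  let g : Fin (r+1) ≃ V :=
    (finSuccEquiv r).trans ((Equiv.optionCongr (Fintype.equivFin {v : V // v ≠ c}).symm).trans
      (Equiv.optionSubtypeNe c))
  have hc : ∀ i : Fin (r+1), g i = c ↔ i = 0 := by
    intro i
    induction i using Fin.cases with
    | zero => simp [g]; rfl
    | succ i =>
      simp only [g, Equiv.trans_apply, finSuccEquiv_succ, Equiv.optionCongr_apply,
        Option.map_some, Equiv.optionSubtypeNe_some]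
      exact iff_of_false (((Fintype.equivFin {v : V // v ≠ c}).symm i).2) (Fin.succ_ne_zero i)
  refine ⟨r, ⟨iso_of_equiv g ?_⟩⟩
  intro i j
  rw [starG, SimpleGraph.fromRel_adj, hadj, hc i, hc j, ne_eq, ne_eq,
    EmbeddingLike.apply_eq_iff_eq]

private lemma s1_case [Fintype V] (c y z : V)
    (hyc : y ≠ c) (hzc : z ≠ c) (hyz : y ≠ z)
    (hadj : ∀ u v, G.Adj u v ↔ u ≠ v ∧ (u = c ∨ v = c ∨ (u = y ∧ v = z) ∨ (u = z ∧ v = y))) :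
    ∃ r : ℕ, 2 ≤ r ∧ Nonempty (G ≃g S1G r) := by
  classical
  set s := Fintype.card {v : V // v ≠ c ∧ v ≠ y ∧ v ≠ z} with hs
  have h3 : s + 2 + 1 = 3 + s := by omega
  have hg0 : Function.Bijective
      (Sum.elim (![c,y,z] : Fin 3 → V)
        (Subtype.val : {v : V // v ≠ c ∧ v ≠ y ∧ v ≠ z} → V)) := by
    constructor
    · rintro (k|t) (k'|t') h
      · simp only [Sum.elim_inl] at h
        congr 1
        fin_cases k <;> fin_cases k' <;> simp_all
      · exact absurd h.symm (by fin_cases k <;> simp [t'.2.1, t'.2.2.1, t'.2.2.2])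
      · exact absurd h (by fin_cases k' <;> simp [t.2.1, t.2.2.1, t.2.2.2])
      · simp only [Sum.elim_inr] at h
        exact congrArg Sum.inr (Subtype.ext h)
    · intro v
      by_cases h1 : v = c
      · exact ⟨Sum.inl 0, by simp [h1]⟩
      by_cases h2 : v = y
      · exact ⟨Sum.inl 1, by simp [h2]⟩
      by_cases h4 : v = z
      · exact ⟨Sum.inl 2, by simp [h4]⟩
      · exact ⟨Sum.inr ⟨v, h1, h2, h4⟩, rfl⟩
  let e0 := Equiv.ofBijective _ hg0
  let e1 : Fin 3 ⊕ Fin s ≃ Fin 3 ⊕ {v : V // v ≠ c ∧ v ≠ y ∧ v ≠ z} :=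
    Equiv.sumCongr (Equiv.refl _) (Fintype.equivFin _).symm
  let E : Fin 3 ⊕ Fin s ≃ Fin (s + 2 + 1) := finSumFinEquiv.trans (finCongr h3.symm)
  let g : Fin (s + 2 + 1) ≃ V := E.symm.trans (e1.trans e0)
  have v1 : (1 : Fin (s + 2 + 1)).val = 1 := by
    have : (1 : Fin (s + 2 + 1)).val = 1 % (s + 2 + 1) := rfl
    rw [this, Nat.mod_eq_of_lt (by omega)]
  have v2 : (2 : Fin (s + 2 + 1)).val = 2 := by
    have : (2 : Fin (s + 2 + 1)).val = 2 % (s + 2 + 1) := rfl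
    rw [this, Nat.mod_eq_of_lt (by omega)]
  have key : ∀ i : Fin (s + 2 + 1),
      (g i = c ↔ i.val = 0) ∧ (g i = y ↔ i.val = 1) ∧ (g i = z ↔ i.val = 2) := by
    intro i
    obtain ⟨x, rfl⟩ : ∃ x : Fin 3 ⊕ Fin s, E x = i := ⟨E.symm i, by simp⟩
    have hg : g (E x) = e0 (e1 x) := by simp [g]
    rw [hg]
    rcases x with k | j
    · have hv : (E (Sum.inl k)).val = k.val := by
        simp [E, finSumFinEquiv]
      rw [hv]
      fin_cases k <;>
        simp_all [e0, e1, Equiv.ofBijective] <;> tauto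
    · have hv : (E (Sum.inr j)).val = 3 + j.val := by
        simp [E, finSumFinEquiv]; omega
      rw [hv]
      have ht := ((Fintype.equivFin {v : V // v ≠ c ∧ v ≠ y ∧ v ≠ z}).symm j).2
      have he : e0 (e1 (Sum.inr j)) =
          ((Fintype.equivFin {v : V // v ≠ c ∧ v ≠ y ∧ v ≠ z}).symm j).val := by
        simp [e0, e1, Equiv.ofBijective]
      rw [he]
      refine ⟨iff_of_false ht.1 (by omega), iff_of_false ht.2.1 (by omega),
        iff_of_false ht.2.2 (by omega)⟩
  refine ⟨s + 2, by omega, ⟨iso_of_equiv g ?_⟩⟩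
  intro i j
  obtain ⟨k1, k2, k3⟩ := key i
  obtain ⟨l1, l2, l3⟩ := key j
  rw [S1G, SimpleGraph.fromRel_adj, hadj]
  simp only [ne_eq, EmbeddingLike.apply_eq_iff_eq, k1, k2, k3, l1, l2, l3,
    Fin.ext_iff, Fin.val_zero, v1, v2]
  omega

private lemma tri_case [Fintype V] (c y z : V)
    (hcy : G.Adj c y) (hcz : G.Adj c z) (hyz : G.Adj y z)
    (hcov : ∀ w, w = c ∨ w = y ∨ w = z ∨ G.Adj c w)
    (hnoy : ∀ w, w ≠ c → w ≠ z → ¬G.Adj y w)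
    (hnoz : ∀ w, w ≠ c → w ≠ y → ¬G.Adj z w)
    (hnoout : ∀ u v, u ≠ c → u ≠ y → u ≠ z → v ≠ c → v ≠ y → v ≠ z → ¬G.Adj u v) :
    ∃ r : ℕ, 2 ≤ r ∧ Nonempty (G ≃g S1G r) := by
  apply s1_case c y z hcy.ne' hcz.ne' hyz.ne
  intro u v
  constructor
  · intro h
    refine ⟨h.ne, ?_⟩
    by_cases huc : u = c; · tauto
    by_cases hvc : v = c; · tauto
    by_cases huy : u = y
    · subst huy
      by_cases hvz : v = z; · tauto
      exact absurd h (hnoy v hvc hvz)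
    by_cases huz : u = z
    · subst huz
      by_cases hvy : v = y; · tauto
      exact absurd h (hnoz v hvc hvy)
    by_cases hvy : v = y
    · subst hvy; exact absurd h.symm (hnoy u huc huz)
    by_cases hvz : v = z
    · subst hvz; exact absurd h.symm (hnoz u huc huy)
    · exact absurd h (hnoout u v huc huy huz hvc hvy hvz)
  · rintro ⟨hne, (rfl | rfl | ⟨rfl, rfl⟩ | ⟨rfl, rfl⟩)⟩
    · rcases hcov v with rfl | rfl | rfl | h
      · exact absurd rfl hne
      · exact hcy
      · exact hcz
      · exact h
    · rcases hcov u with rfl | rfl | rfl | h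
      · exact absurd rfl hne
      · exact hcy.symm
      · exact hcz.symm
      · exact h.symm
    · exact hyz
    · exact hyz.symm

private lemma ds_case [Fintype V] (c d p q : V)
    (hcd : G.Adj c d) (hp : G.Adj c p) (hpd : p ≠ d) (hq : G.Adj d q) (hqc : q ≠ c)
    (hdisj : ∀ v, G.Adj c v → G.Adj d v → False)
    (hcover : ∀ v, v = c ∨ v = d ∨ G.Adj c v ∨ G.Adj d v)
    (hedge : ∀ u v, G.Adj u v → u = c ∨ u = d ∨ v = c ∨ v = d) :
    ∃ a b : ℕ, 1 ≤ a ∧ 1 ≤ b ∧ Nonempty (G ≃g doubleStarG a b) := by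
  classical
  set A := {v : V // G.Adj c v ∧ v ≠ d} with hA
  set B := {v : V // G.Adj d v ∧ v ≠ c} with hB
  have hAc : ∀ t : A, t.val ≠ c := fun t => t.2.1.ne'
  have hBd : ∀ t : B, t.val ≠ d := fun t => t.2.1.ne'
  have hAB : ∀ (t : A) (u : B), t.val ≠ u.val := by
    intro t u h
    exact hdisj u.val (h ▸ t.2.1) u.2.1
  have hApos : 0 < Fintype.card A := Fintype.card_pos_iff.mpr ⟨⟨p, hp, hpd⟩⟩
  have hBpos : 0 < Fintype.card B := Fintype.card_pos_iff.mpr ⟨⟨q, hq, hqc⟩⟩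
  let g0 : Unit ⊕ Unit ⊕ A ⊕ B → V :=
    Sum.elim (fun _ => c) (Sum.elim (fun _ => d) (Sum.elim Subtype.val Subtype.val))
  have hg0 : Function.Bijective g0 := by
    constructor
    · have hne : c ≠ d := hcd.ne
      rintro (⟨⟩|⟨⟩|t|t) (⟨⟩|⟨⟩|t'|t') h <;>
        simp only [g0, Sum.elim_inl, Sum.elim_inr] at h <;>
        first
          | rfl
          | (exact absurd h (by first
              | exact hne | exact hne.symm
              | exact (hAc _).symm | exact (hAc _)
              | exact (hBd _).symm | exact (hBd _)
              | exact t'.2.2.symm | exact t.2.2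
              | exact (hAB _ _) | exact (hAB _ _).symm
              | exact t'.2.2 | exact t.2.2.symm))
          | (exact congrArg _ (congrArg _ (congrArg _ (Subtype.ext h))))
    · intro v
      by_cases h1 : v = c
      · exact ⟨Sum.inl (), h1.symm⟩
      by_cases h2 : v = d
      · exact ⟨Sum.inr (Sum.inl ()), h2.symm⟩
      rcases hcover v with h|h|h|h
      · exact absurd h h1
      · exact absurd h h2
      · exact ⟨Sum.inr (Sum.inr (Sum.inl ⟨v, h, h2⟩)), rfl⟩
      · exact ⟨Sum.inr (Sum.inr (Sum.inr ⟨v, h, h1⟩)), rfl⟩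
  let eA := (Fintype.equivFin A).symm
  let eB := (Fintype.equivFin B).symm
  let g : Unit ⊕ Unit ⊕ Fin (Fintype.card A) ⊕ Fin (Fintype.card B) ≃ V :=
    (Equiv.sumCongr (Equiv.refl _) (Equiv.sumCongr (Equiv.refl _)
      (Equiv.sumCongr eA eB))).trans (Equiv.ofBijective g0 hg0)
  have gc : g (Sum.inl ()) = c := rfl
  have gd : g (Sum.inr (Sum.inl ())) = d := rfl
  have gA : ∀ i, g (Sum.inr (Sum.inr (Sum.inl i))) = (eA i).val := fun _ => rfl
  have gB : ∀ j, g (Sum.inr (Sum.inr (Sum.inr j))) = (eB j).val := fun _ => rfl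
  refine ⟨Fintype.card A, Fintype.card B, hApos, hBpos, ⟨iso_of_equiv g ?_⟩⟩
  have noAA : ∀ (u v : V), u ≠ c → u ≠ d → v ≠ c → v ≠ d → ¬ G.Adj u v := by
    intro u v h1 h2 h3 h4 h
    rcases hedge u v h with h|h|h|h <;> tauto
  rintro (⟨⟩|⟨⟩|i|i) (⟨⟩|⟨⟩|j|j) <;>
    simp only [doubleStarG, SimpleGraph.fromRel_adj, gc, gd, gA, gB, ne_eq,
      Sum.inr.injEq, Sum.inl.injEq, reduceCtorEq, exists_eq', exists_false,
      and_true, and_false, false_and, true_and, false_or, or_false, or_self,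
      not_true_eq_false, not_false_eq_true, iff_true, iff_false]
  · exact iff_of_false id (G.loopless.irrefl c)
  · exact iff_of_true trivial hcd
  · exact iff_of_true trivial (eA _).2.1
  · exact iff_of_false id (fun h => hdisj _ h (eB _).2.1)
  · exact iff_of_true trivial hcd.symm
  · exact iff_of_false id (G.loopless.irrefl d)
  · exact iff_of_false id (fun h => hdisj _ (eA _).2.1 h)
  · exact iff_of_true trivial (eB _).2.1
  · exact iff_of_true trivial (eA i).2.1.symm
  · exact iff_of_false id (fun h => hdisj _ (eA i).2.1 h.symm)
  · exact iff_of_false id (noAA _ _ (hAc _) (eA i).2.2 (hAc _) (eA j).2.2)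
  · exact iff_of_false id (noAA _ _ (hAc _) (eA i).2.2 (eB j).2.2 (hBd _))
  · exact iff_of_false id (fun h => hdisj _ h.symm (eB i).2.1)
  · exact iff_of_true trivial (eB i).2.1.symm
  · exact iff_of_false id (noAA _ _ (eB i).2.2 (hBd _) (hAc _) (eA j).2.2)
  · exact iff_of_false id (noAA _ _ (eB i).2.2 (hBd _) (eB j).2.2 (hBd _))

private lemma p4_half
    (hP5 : ¬ ContainsSub (SimpleGraph.pathGraph 5) G)
    (hC4 : ¬ ∃ a b c d : V, G.Adj a b ∧ G.Adj b c ∧ G.Adj c d ∧ G.Adj d a ∧ a ≠ c ∧ b ≠ d)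
    (a b c d s t : V) (hab : G.Adj a b) (hbc : G.Adj b c) (hcd : G.Adj c d)
    (hac : a ≠ c) (had : a ≠ d) (hbd : b ≠ d)
    (hs : G.Adj b s) (hst : G.Adj s t) (hsc : s ≠ c) (htb : t ≠ b) (htc : t ≠ c) :
    False := by
  by_cases hsd : s = d
  · have hst' : G.Adj d t := by rw [← hsd]; exact hst
    by_cases hta : t = a
    · have hda : G.Adj d a := by rw [← hta]; exact hst'
      exact hC4 ⟨a, b, c, d, hab, hbc, hcd, hda, hac, hbd⟩
    · exact hP5 (mkP5 hst'.symm hcd.symm hbc.symm hab.symm htc htb hta hbd.symm had.symm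
        hac.symm)
  by_cases hsa : s = a
  · have hst' : G.Adj a t := by rw [← hsa]; exact hst
    by_cases htd : t = d
    · have hda : G.Adj d a := by rw [htd] at hst'; exact hst'.symm
      exact hC4 ⟨a, b, c, d, hab, hbc, hcd, hda, hac, hbd⟩
    · exact hP5 (mkP5 hst'.symm hab hbc hcd htb htc htd hac had hbd)
  · by_cases htd : t = d
    · have hst' : G.Adj s d := by rw [← htd]; exact hst
      exact hP5 (mkP5 hab hs hst' hcd.symm (fun h => hsa h.symm) had hac hbd hbc.ne hsc)
    by_cases hta : t = a
    · have hst' : G.Adj s a := by rw [← hta]; exact hst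
      exact hP5 (mkP5 hcd.symm hbc.symm hs hst' hbd.symm (fun h => hsd h.symm) had.symm
        hsc.symm hac.symm hab.ne')
    · exact hP5 (mkP5 hst.symm hs.symm hbc hcd htb htc htd hsc hsd hbd)

end Helpers

set_option maxHeartbeats 3200000 in
/-- a connected `P₅`-free graph is `C₄`, `θ(1,2,2) = K₄` minus an edge, `K₄`,
`S¹_{r+1}` (`r ≥ 2`), a double star `D_{a,b}` (`a,b ≥ 1`), or a star `K_{1,r}` (`r ≥ 0`). -/
theorem P5_free_structure {V : Type} [Fintype V] (G : SimpleGraph V)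
    (hconn : G.Connected)
    (hP5 : ¬ ContainsSub (SimpleGraph.pathGraph 5) G) :
    Nonempty (G ≃g C4G) ∨
    Nonempty (G ≃g theta122G) ∨
    Nonempty (G ≃g (completeGraph (Fin 4))) ∨
    (∃ r : ℕ, 2 ≤ r ∧ Nonempty (G ≃g S1G r)) ∨
    (∃ a b : ℕ, 1 ≤ a ∧ 1 ≤ b ∧ Nonempty (G ≃g doubleStarG a b)) ∨
    (∃ r : ℕ, Nonempty (G ≃g starG r)) := by
  classical
  by_cases hC4 : ∃ a b c d : V, G.Adj a b ∧ G.Adj b c ∧ G.Adj c d ∧ G.Adj d a ∧ a ≠ c ∧ b ≠ d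
  · -- Case 1 : there is a 4-cycle
    obtain ⟨a, b, c, d, hab, hbc, hcd, hda, hac, hbd⟩ := hC4
    have hcover : ∀ v, v = a ∨ v = b ∨ v = c ∨ v = d := by
      by_contra hcc
      push_neg at hcc
      obtain ⟨v, hv1, hv2, hv3, hv4⟩ := hcc
      obtain ⟨p⟩ := hconn.preconnected v a
      obtain ⟨s, t, hsS, htS, hstA⟩ :=
        crossing (S := {w : V | w ≠ a ∧ w ≠ b ∧ w ≠ c ∧ w ≠ d}) p ⟨hv1, hv2, hv3, hv4⟩
          (fun h => h.1 rfl)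
      obtain ⟨hs1, hs2, hs3, hs4⟩ := hsS
      have ht4 : t = a ∨ t = b ∨ t = c ∨ t = d := by
        by_contra h; push_neg at h; exact htS ⟨h.1, h.2.1, h.2.2.1, h.2.2.2⟩
      rcases ht4 with rfl | rfl | rfl | rfl
      · exact hP5 (mkP5 hstA hab hbc hcd hs2 hs3 hs4 hac hda.ne' hbd)
      · exact hP5 (mkP5 hstA hbc hcd hda hs3 hs4 hs1 hbd hab.ne' hac.symm)
      · exact hP5 (mkP5 hstA hcd hda hab hs4 hs1 hs2 hac.symm hbc.ne' hbd.symm)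
      · exact hP5 (mkP5 hstA hda hab hbc hs1 hs2 hs3 hbd.symm hcd.ne' hac)
    by_cases hACd : G.Adj a c
    · by_cases hBDd : G.Adj b d
      · -- K4
        refine Or.inr (Or.inr (Or.inl ⟨iso_of_equiv (Equiv.ofBijective _
          (bij4 a b c d hab.ne hac hda.ne' hbc.ne hbd hcd.ne hcover)) ?_⟩))
        intro i j
        simp only [Equiv.ofBijective_apply]
        fin_cases i <;> fin_cases j <;>
          simp_all [completeGraph, G.adj_comm a b, G.adj_comm b c, G.adj_comm c d,
            G.adj_comm d a, G.adj_comm a c, G.adj_comm b d]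
      · -- theta, diagonal ac : order a b c d
        refine Or.inr (Or.inl ⟨iso_of_equiv (Equiv.ofBijective _
          (bij4 a b c d hab.ne hac hda.ne' hbc.ne hbd hcd.ne hcover)) ?_⟩)
        intro i j
        simp only [Equiv.ofBijective_apply]
        fin_cases i <;> fin_cases j <;>
          simp_all [theta122G, SimpleGraph.fromEdgeSet_adj, Sym2.eq_iff,
            G.adj_comm a b, G.adj_comm b c, G.adj_comm c d,
            G.adj_comm d a, G.adj_comm a c, G.adj_comm b d]
    · by_cases hBDd : G.Adj b d
      · -- theta, diagonal bd : order b c d a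
        have hcov' : ∀ v, v = b ∨ v = c ∨ v = d ∨ v = a := by
          intro v; rcases hcover v with h|h|h|h <;> tauto
        refine Or.inr (Or.inl ⟨iso_of_equiv (Equiv.ofBijective _
          (bij4 b c d a hbc.ne hbd hab.ne' hcd.ne hac.symm hda.ne hcov')) ?_⟩)
        intro i j
        simp only [Equiv.ofBijective_apply]
        fin_cases i <;> fin_cases j <;>
          simp_all [theta122G, SimpleGraph.fromEdgeSet_adj, Sym2.eq_iff,
            G.adj_comm a b, G.adj_comm b c, G.adj_comm c d,
            G.adj_comm d a, G.adj_comm a c, G.adj_comm b d]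
      · -- C4
        refine Or.inl ⟨iso_of_equiv (Equiv.ofBijective _
          (bij4 a b c d hab.ne hac hda.ne' hbc.ne hbd hcd.ne hcover)) ?_⟩
        intro i j
        simp only [Equiv.ofBijective_apply]
        fin_cases i <;> fin_cases j <;>
          simp_all [C4G, SimpleGraph.fromEdgeSet_adj, Sym2.eq_iff,
            G.adj_comm a b, G.adj_comm b c, G.adj_comm c d,
            G.adj_comm d a, G.adj_comm a c, G.adj_comm b d]
  · by_cases hT : ∃ x y z : V, G.Adj x y ∧ G.Adj y z ∧ G.Adj x z
    · -- Case 2 : triangle, no 4-cycle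
      obtain ⟨x, y, z, hxy, hyz, hxz⟩ := hT
      have htwoxy : ∀ w, w ≠ z → G.Adj w x → G.Adj w y → False := by
        intro w hwz h1 h2
        exact hC4 ⟨w, x, z, y, h1, hxz, hyz.symm, h2.symm, hwz, hxy.ne⟩
      have htwoxz : ∀ w, w ≠ y → G.Adj w x → G.Adj w z → False := by
        intro w hwy h1 h2
        exact hC4 ⟨w, x, y, z, h1, hxy, hyz, h2.symm, hwy, hxz.ne⟩
      have htwoyz : ∀ w, w ≠ x → G.Adj w y → G.Adj w z → False := by
        intro w hwx h1 h2
        exact hC4 ⟨w, y, x, z, h1, hxy.symm, hxz, h2.symm, hwx, hyz.ne⟩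
      have houtx : ∀ w w', w ≠ x → w ≠ y → w ≠ z → w' ≠ x → w' ≠ y → w' ≠ z →
          G.Adj w x → G.Adj w w' → False := by
        intro w w' _ h2 h3 h4 h5 h6 ha he
        exact hP5 (mkP5 he.symm ha hxy hyz h4 h5 h6 h2 h3 hxz.ne)
      have houty : ∀ w w', w ≠ x → w ≠ y → w ≠ z → w' ≠ x → w' ≠ y → w' ≠ z →
          G.Adj w y → G.Adj w w' → False := by
        intro w w' h1 _ h3 h4 h5 h6 ha he
        exact hP5 (mkP5 he.symm ha hyz hxz.symm h5 h6 h4 h3 h1 hxy.ne')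
      have houtz : ∀ w w', w ≠ x → w ≠ y → w ≠ z → w' ≠ x → w' ≠ y → w' ≠ z →
          G.Adj w z → G.Adj w w' → False := by
        intro w w' h1 h2 _ h4 h5 h6 ha he
        exact hP5 (mkP5 he.symm ha hxz.symm hxy h6 h4 h5 h1 h2 hyz.ne')
      have hcovT : ∀ w, w = x ∨ w = y ∨ w = z ∨ G.Adj x w ∨ G.Adj y w ∨ G.Adj z w := by
        by_contra hcc
        push_neg at hcc
        obtain ⟨v, hv1, hv2, hv3, hv4, hv5, hv6⟩ := hcc
        obtain ⟨p⟩ := hconn.preconnected v x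
        obtain ⟨s, t, hsS, htS, hstA⟩ :=
          crossing (S := {w : V | w ≠ x ∧ w ≠ y ∧ w ≠ z ∧ ¬G.Adj x w ∧ ¬G.Adj y w ∧ ¬G.Adj z w})
            p ⟨hv1, hv2, hv3, hv4, hv5, hv6⟩ (fun h => h.1 rfl)
        obtain ⟨hs1, hs2, hs3, hs4, hs5, hs6⟩ := hsS
        by_cases ht1 : t = x
        · exact hs4 (ht1 ▸ hstA).symm
        by_cases ht2 : t = y
        · exact hs5 (ht2 ▸ hstA).symm
        by_cases ht3 : t = z
        · exact hs6 (ht3 ▸ hstA).symm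
        have ht6 : G.Adj x t ∨ G.Adj y t ∨ G.Adj z t := by
          by_contra h; push_neg at h
          exact htS ⟨ht1, ht2, ht3, h.1, h.2.1, h.2.2⟩
        rcases ht6 with h | h | h
        · exact houtx t s ht1 ht2 ht3 hs1 hs2 hs3 h.symm hstA.symm
        · exact houty t s ht1 ht2 ht3 hs1 hs2 hs3 h.symm hstA.symm
        · exact houtz t s ht1 ht2 ht3 hs1 hs2 hs3 h.symm hstA.symm
      have hpairxy : ∀ u v, u ≠ x → u ≠ y → u ≠ z → v ≠ x → v ≠ y → v ≠ z →
          G.Adj x u → G.Adj y v → False := by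
        intro u v hu1 hu2 hu3 hv1 hv2 hv3 h1 h2
        by_cases huv : u = v
        · subst huv
          exact htwoxy u hu3 h1.symm h2.symm
        · exact hP5 (mkP5 h1.symm hxz hyz.symm h2 hu3 hu2 huv hxy.ne (fun h => hv1 h.symm)
            (fun h => hv3 h.symm))
      have hpairxz : ∀ u v, u ≠ x → u ≠ y → u ≠ z → v ≠ x → v ≠ y → v ≠ z →
          G.Adj x u → G.Adj z v → False := by
        intro u v hu1 hu2 hu3 hv1 hv2 hv3 h1 h2
        by_cases huv : u = v
        · subst huv
          exact htwoxz u hu2 h1.symm h2.symm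
        · exact hP5 (mkP5 h1.symm hxy hyz h2 hu2 hu3 huv hxz.ne (fun h => hv1 h.symm)
            (fun h => hv2 h.symm))
      have hpairyz : ∀ u v, u ≠ x → u ≠ y → u ≠ z → v ≠ x → v ≠ y → v ≠ z →
          G.Adj y u → G.Adj z v → False := by
        intro u v hu1 hu2 hu3 hv1 hv2 hv3 h1 h2
        by_cases huv : u = v
        · subst huv
          exact htwoyz u hu1 h1.symm h2.symm
        · exact hP5 (mkP5 h1.symm hxy.symm hxz h2 hu1 hu3 huv hyz.ne (fun h => hv2 h.symm)
            (fun h => hv1 h.symm))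
      have hnooutAll : ∀ u v, u ≠ x → u ≠ y → u ≠ z → v ≠ x → v ≠ y → v ≠ z →
          ¬ G.Adj u v := by
        intro u v hu1 hu2 hu3 hv1 hv2 hv3 h
        rcases hcovT u with rfl | rfl | rfl | hu | hu | hu
        · exact hu1 rfl
        · exact hu2 rfl
        · exact hu3 rfl
        · exact houtx u v hu1 hu2 hu3 hv1 hv2 hv3 hu.symm h
        · exact houty u v hu1 hu2 hu3 hv1 hv2 hv3 hu.symm h
        · exact houtz u v hu1 hu2 hu3 hv1 hv2 hv3 hu.symm h
      by_cases hPy : ∃ w, w ≠ x ∧ w ≠ y ∧ w ≠ z ∧ G.Adj y w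
      · obtain ⟨w0, hw1, hw2, hw3, hw4⟩ := hPy
        refine Or.inr (Or.inr (Or.inr (Or.inl (tri_case y x z hxy.symm hyz hxz ?_ ?_ ?_ ?_))))
        · intro w
          by_cases h1 : w = x; · tauto
          by_cases h2 : w = y; · tauto
          by_cases h3 : w = z; · tauto
          rcases hcovT w with rfl | rfl | rfl | h | h | h
          · tauto
          · tauto
          · tauto
          · exact absurd hw4 (fun _ => hpairxy w w0 h1 h2 h3 hw1 hw2 hw3 h hw4)
          · tauto
          · exact absurd hw4 (fun _ => hpairyz w0 w hw1 hw2 hw3 h1 h2 h3 hw4 h)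
        · intro w hwc hwz hAdj
          by_cases hwx : w = x
          · exact G.loopless.irrefl x (hwx ▸ hAdj)
          · exact hpairxy w w0 hwx hwc hwz hw1 hw2 hw3 hAdj hw4
        · intro w hwc hwx hAdj
          by_cases hwz : w = z
          · exact G.loopless.irrefl z (hwz ▸ hAdj)
          · exact hpairyz w0 w hw1 hw2 hw3 hwx hwc hwz hw4 hAdj
        · intro u v h1 h2 h3 h4 h5 h6
          exact hnooutAll u v h2 h1 h3 h5 h4 h6
      · by_cases hPz : ∃ w, w ≠ x ∧ w ≠ y ∧ w ≠ z ∧ G.Adj z w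
        · obtain ⟨w0, hw1, hw2, hw3, hw4⟩ := hPz
          push_neg at hPy
          refine Or.inr (Or.inr (Or.inr (Or.inl
            (tri_case z x y hxz.symm hyz.symm hxy ?_ ?_ ?_ ?_))))
          · intro w
            by_cases h1 : w = x; · tauto
            by_cases h2 : w = y; · tauto
            by_cases h3 : w = z; · tauto
            rcases hcovT w with rfl | rfl | rfl | h | h | h
            · tauto
            · tauto
            · tauto
            · exact absurd hw4 (fun _ => hpairxz w w0 h1 h2 h3 hw1 hw2 hw3 h hw4)
            · exact absurd h (hPy w h1 h2 h3)
            · tauto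
          · intro w hwc hwy hAdj
            by_cases hwx : w = x
            · exact G.loopless.irrefl x (hwx ▸ hAdj)
            · exact hpairxz w w0 hwx hwy hwc hw1 hw2 hw3 hAdj hw4
          · intro w hwc hwx hAdj
            by_cases hwy : w = y
            · exact G.loopless.irrefl y (hwy ▸ hAdj)
            · exact hPy w hwx hwy hwc hAdj
          · intro u v h1 h2 h3 h4 h5 h6
            exact hnooutAll u v h2 h3 h1 h5 h6 h4
        · push_neg at hPy
          push_neg at hPz
          refine Or.inr (Or.inr (Or.inr (Or.inl (tri_case x y z hxy hxz hyz ?_ ?_ ?_ ?_))))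
          · intro w
            by_cases h1 : w = x; · tauto
            by_cases h2 : w = y; · tauto
            by_cases h3 : w = z; · tauto
            rcases hcovT w with rfl | rfl | rfl | h | h | h
            · tauto
            · tauto
            · tauto
            · tauto
            · exact absurd h (hPy w h1 h2 h3)
            · exact absurd h (hPz w h1 h2 h3)
          · intro w hwx hwz hAdj
            by_cases hwy : w = y
            · exact G.loopless.irrefl y (hwy ▸ hAdj)
            · exact hPy w hwx hwy hwz hAdj
          · intro w hwx hwy hAdj
            by_cases hwz : w = z
            · exact G.loopless.irrefl z (hwz ▸ hAdj)
            · exact hPz w hwx hwy hwz hAdj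
          · exact hnooutAll
    · -- Case 3 : no triangle, no 4-cycle
      by_cases hE : ∃ u v : V, G.Adj u v
      · obtain ⟨u, v, huv⟩ := hE
        by_cases hP4 : ∃ a b c d : V, G.Adj a b ∧ G.Adj b c ∧ G.Adj c d ∧ a ≠ c ∧ a ≠ d ∧ b ≠ d
        · -- double star with centres b c
          obtain ⟨a, b, c, d, hab, hbc, hcd, hac, had, hbd⟩ := hP4
          have hdisj : ∀ w, G.Adj b w → G.Adj c w → False := by
            intro w h1 h2
            exact hT ⟨b, w, c, h1, h2.symm, hbc⟩
          have hcover : ∀ w, w = b ∨ w = c ∨ G.Adj b w ∨ G.Adj c w := by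
            by_contra hcc
            push_neg at hcc
            obtain ⟨v0, hv1, hv2, hv3, hv4⟩ := hcc
            obtain ⟨p⟩ := hconn.preconnected v0 b
            obtain ⟨s, t, hsS, htS, hstA⟩ :=
              crossing (S := {w : V | w ≠ b ∧ w ≠ c ∧ ¬G.Adj b w ∧ ¬G.Adj c w})
                p ⟨hv1, hv2, hv3, hv4⟩ (fun h => h.1 rfl)
            obtain ⟨hs1, hs2, hs3, hs4⟩ := hsS
            by_cases ht1 : t = b
            · exact hs3 (ht1 ▸ hstA).symm
            by_cases ht2 : t = c
            · exact hs4 (ht2 ▸ hstA).symm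
            have ht3 : G.Adj b t ∨ G.Adj c t := by
              by_contra h; push_neg at h
              exact htS ⟨ht1, ht2, h.1, h.2⟩
            rcases ht3 with h | h
            · exact p4_half hP5 hC4 a b c d t s hab hbc hcd hac had hbd h hstA.symm ht2 hs1 hs2
            · exact p4_half hP5 hC4 d c b a t s hcd.symm hbc.symm hab.symm hbd.symm had.symm
                hac.symm h hstA.symm ht1 hs2 hs1
          have hedge : ∀ s t, G.Adj s t → s = b ∨ s = c ∨ t = b ∨ t = c := by
            intro s t h
            by_contra hcc
            push_neg at hcc
            obtain ⟨h1, h2, h3, h4⟩ := hcc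
            rcases hcover s with rfl | rfl | hs | hs
            · exact h1 rfl
            · exact h2 rfl
            · exact p4_half hP5 hC4 a b c d s t hab hbc hcd hac had hbd hs h h2 h3 h4
            · exact p4_half hP5 hC4 d c b a s t hcd.symm hbc.symm hab.symm hbd.symm had.symm
                hac.symm hs h h1 h4 h3
          exact Or.inr (Or.inr (Or.inr (Or.inr (Or.inl
            (ds_case b c a d hbc hab.symm hac hcd hbd.symm hdisj hcover hedge)))))
        · -- star
          have hcovS : ∀ w, w = u ∨ w = v ∨ G.Adj u w ∨ G.Adj v w := by
            by_contra hcc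
            push_neg at hcc
            obtain ⟨v0, hv1, hv2, hv3, hv4⟩ := hcc
            obtain ⟨p⟩ := hconn.preconnected v0 u
            obtain ⟨s, t, hsS, htS, hstA⟩ :=
              crossing (S := {w : V | w ≠ u ∧ w ≠ v ∧ ¬G.Adj u w ∧ ¬G.Adj v w})
                p ⟨hv1, hv2, hv3, hv4⟩ (fun h => h.1 rfl)
            obtain ⟨hs1, hs2, hs3, hs4⟩ := hsS
            by_cases ht1 : t = u
            · exact hs3 (ht1 ▸ hstA).symm
            by_cases ht2 : t = v
            · exact hs4 (ht2 ▸ hstA).symm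
            have ht3 : G.Adj u t ∨ G.Adj v t := by
              by_contra h; push_neg at h
              exact htS ⟨ht1, ht2, h.1, h.2⟩
            rcases ht3 with h | h
            · exact hP4 ⟨s, t, u, v, hstA, h.symm, huv, hs1, hs2, ht2⟩
            · exact hP4 ⟨s, t, v, u, hstA, h.symm, huv.symm, hs2, hs1, ht1⟩
          have hpairuv : ∀ w w', w ≠ u → w ≠ v → w' ≠ u → w' ≠ v →
              G.Adj u w → G.Adj v w' → False := by
            intro w w' h1 h2 h3 h4 ha hb
            by_cases hww : w = w'
            · subst hww
              exact hT ⟨u, w, v, ha, hb.symm, huv⟩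
            · exact hP4 ⟨w, u, v, w', ha.symm, huv, hb, h2, hww, h3.symm⟩
          by_cases hLv : ∃ w, w ≠ u ∧ w ≠ v ∧ G.Adj v w
          · obtain ⟨w0, hw1, hw2, hw3⟩ := hLv
            refine Or.inr (Or.inr (Or.inr (Or.inr (Or.inr (star_case v ?_)))))
            intro s t
            constructor
            · intro h
              refine ⟨h.ne, ?_⟩
              by_cases hsv : s = v; · tauto
              by_cases htv : t = v; · tauto
              exfalso
              by_cases hsu : s = u
              · have h' : G.Adj u t := by rw [← hsu]; exact h
                exact hpairuv t w0 h'.ne' htv hw1 hw2 h' hw3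
              by_cases htu : t = u
              · have h' : G.Adj u s := by rw [← htu]; exact h.symm
                exact hpairuv s w0 h'.ne' hsv hw1 hw2 h' hw3
              rcases hcovS s with rfl | rfl | hs | hs
              · exact hsu rfl
              · exact hsv rfl
              · exact hpairuv s w0 hsu hsv hw1 hw2 hs hw3
              · rcases hcovS t with rfl | rfl | ht | ht
                · exact htu rfl
                · exact htv rfl
                · exact hpairuv t w0 htu htv hw1 hw2 ht hw3
                · exact hT ⟨v, s, t, hs, h, ht⟩
            · rintro ⟨hne, (rfl | rfl)⟩
              · rcases hcovS t with rfl | rfl | ht | ht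
                · exact huv.symm
                · exact absurd rfl hne
                · exact (hpairuv t w0 ht.ne' hne.symm hw1 hw2 ht hw3).elim
                · exact ht
              · rcases hcovS s with rfl | rfl | hs | hs
                · exact huv
                · exact absurd rfl hne
                · exact (hpairuv s w0 hs.ne' hne hw1 hw2 hs hw3).elim
                · exact hs.symm
          · push_neg at hLv
            refine Or.inr (Or.inr (Or.inr (Or.inr (Or.inr (star_case u ?_)))))
            intro s t
            constructor
            · intro h
              refine ⟨h.ne, ?_⟩
              by_cases hsu : s = u; · tauto
              by_cases htu : t = u; · tauto
              exfalso
              by_cases hsv : s = v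
              · have h' : G.Adj v t := by rw [← hsv]; exact h
                exact hLv t htu h'.ne' h'
              by_cases htv : t = v
              · have h' : G.Adj v s := by rw [← htv]; exact h.symm
                exact hLv s hsu h'.ne' h'
              have hs : G.Adj u s := by
                rcases hcovS s with rfl | rfl | hs | hs
                · exact absurd rfl hsu
                · exact absurd rfl hsv
                · exact hs
                · exact absurd hs (hLv s hsu hsv)
              have ht : G.Adj u t := by
                rcases hcovS t with rfl | rfl | ht | ht
                · exact absurd rfl htu
                · exact absurd rfl htv
                · exact ht
                · exact absurd ht (hLv t htu htv)
              exact hT ⟨u, s, t, hs, h, ht⟩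
            · rintro ⟨hne, (rfl | rfl)⟩
              · rcases hcovS t with rfl | rfl | ht | ht
                · exact absurd rfl hne
                · exact huv
                · exact ht
                · exact absurd ht (hLv t hne.symm ht.ne')
              · rcases hcovS s with rfl | rfl | hs | hs
                · exact absurd rfl hne
                · exact huv.symm
                · exact hs.symm
                · exact absurd hs (hLv s hne hs.ne')
      · -- no edges : star K_{1,0}
        push_neg at hE
        have hsub : ∀ s t : V, s = t := by
          intro s t
          obtain ⟨p⟩ := hconn.preconnected s t
          cases p with
          | nil => rfl
          | cons h _ => exact absurd h (hE _ _)
        obtain ⟨v0⟩ := hconn.nonempty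
        refine Or.inr (Or.inr (Or.inr (Or.inr (Or.inr (star_case v0 ?_)))))
        intro s t
        exact iff_of_false (hE s t) (fun h => h.1 (hsub s t))
end

section
/- Let G be a θ(1,3,3)-free graph, u* a vertex of G, and H the subgraph of G induced by the neighborhood N(u*). If H contains a 4-cycle u_1u_2u_3u_4u_1, and u, v are two distinct vertices on this 4-cycle, then u and v have no common neighbor outside N[u*] (i.e., N(u) ∩ N(v) ∩ (V(G) \ N[u*]) = ∅). -/
open Matrix SimpleGraph

/-- The theta graph `θ(1,3,3)`: vertices `0` and `1` joined by the edge `01` and the two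
paths `0-2-3-1` and `0-4-5-1` of length three. -/
def theta133 : SimpleGraph (Fin 6) :=
  SimpleGraph.fromEdgeSet {s(0,1), s(0,2), s(2,3), s(3,1), s(0,4), s(4,5), s(5,1)}

set_option maxHeartbeats 2000000 in
/-- If `G` has six distinct vertices with the adjacency pattern of `θ(1,3,3)`, then `G`
contains `θ(1,3,3)`. -/
lemma mk_theta {V : Type} {G : SimpleGraph V} {a b c d e f : V}
    (hab : G.Adj a b) (hac : G.Adj a c) (hcd : G.Adj c d) (hdb : G.Adj d b)
    (hae : G.Adj a e) (hef : G.Adj e f) (hfb : G.Adj f b)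
    (had : a ≠ d) (haf : a ≠ f) (hbc : b ≠ c) (hbe : b ≠ e)
    (hce : c ≠ e) (hcf : c ≠ f) (hde : d ≠ e) (hdf : d ≠ f) :
    ContainsSub theta133 G := by
  refine ⟨⟨fun i => match i with
    | 0 => a | 1 => b | 2 => c | 3 => d | 4 => e | 5 => f, ?_⟩, ?_⟩
  · intro i j h
    fin_cases i <;> fin_cases j <;>
      first
        | exact hab | exact hab.symm | exact hac | exact hac.symm
        | exact hcd | exact hcd.symm | exact hdb | exact hdb.symm
        | exact hae | exact hae.symm | exact hef | exact hef.symm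
        | exact hfb | exact hfb.symm
        | (exfalso; simp [theta133, Sym2.eq, Sym2.rel_iff'] at h)
  · intro i j h
    fin_cases i <;> fin_cases j <;>
      first
        | rfl
        | exact absurd h hab.ne | exact absurd h hab.ne'
        | exact absurd h hac.ne | exact absurd h hac.ne'
        | exact absurd h hcd.ne | exact absurd h hcd.ne'
        | exact absurd h hdb.ne | exact absurd h hdb.ne'
        | exact absurd h hae.ne | exact absurd h hae.ne'
        | exact absurd h hef.ne | exact absurd h hef.ne'
        | exact absurd h hfb.ne | exact absurd h hfb.ne'
        | exact absurd h had | exact absurd h had.symm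
        | exact absurd h haf | exact absurd h haf.symm
        | exact absurd h hbc | exact absurd h hbc.symm
        | exact absurd h hbe | exact absurd h hbe.symm
        | exact absurd h hce | exact absurd h hce.symm
        | exact absurd h hcf | exact absurd h hcf.symm
        | exact absurd h hde | exact absurd h hde.symm
        | exact absurd h hdf | exact absurd h hdf.symm

/-- in a `θ(1,3,3)`-free graph `G`, if the neighbourhood of `u*` contains a
4-cycle `u₁u₂u₃u₄u₁`, then no two distinct vertices of this 4-cycle have a common
neighbour outside `N[u*]`. -/
theorem no_common_neighbor_outside {V : Type} [Fintype V] (G : SimpleGraph V)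
    (hfree : ¬ ContainsSub theta133 G) (ustar u1 u2 u3 u4 : V)
    (h1 : u1 ∈ G.neighborSet ustar) (h2 : u2 ∈ G.neighborSet ustar)
    (h3 : u3 ∈ G.neighborSet ustar) (h4 : u4 ∈ G.neighborSet ustar)
    (hdist : ([u1, u2, u3, u4] : List V).Pairwise (· ≠ ·))
    (h12 : G.Adj u1 u2) (h23 : G.Adj u2 u3) (h34 : G.Adj u3 u4) (h41 : G.Adj u4 u1)
    (u v : V) (hu : u ∈ ({u1, u2, u3, u4} : Set V)) (hv : v ∈ ({u1, u2, u3, u4} : Set V))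
    (huv : u ≠ v)
    (w : V) (hw1 : w ≠ ustar) (hw2 : w ∉ G.neighborSet ustar) :
    ¬ (G.Adj u w ∧ G.Adj v w) := by
  rw [SimpleGraph.mem_neighborSet] at h1 h2 h3 h4
  rintro ⟨huw, hvw⟩
  simp only [List.pairwise_cons, List.mem_cons, List.mem_singleton,
    List.not_mem_nil, or_false, List.Pairwise.nil, and_true] at hdist
  obtain ⟨hd1, hd2, hd34⟩ := hdist
  have d12 : u1 ≠ u2 := hd1 u2 (Or.inl rfl)
  have d13 : u1 ≠ u3 := hd1 u3 (Or.inr (Or.inl rfl))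
  have d14 : u1 ≠ u4 := hd1 u4 (Or.inr (Or.inr rfl))
  have d23 : u2 ≠ u3 := hd2 u3 (Or.inl rfl)
  have d24 : u2 ≠ u4 := hd2 u4 (Or.inr rfl)
  have wne : ∀ x : V, G.Adj ustar x → w ≠ x := by
    intro x hx h; exact hw2 (by rw [SimpleGraph.mem_neighborSet, h]; exact hx)
  -- w adjacent to two consecutive vertices a, b of the 4-cycle a b c d
  have adjcase : ∀ a b c d : V, G.Adj ustar a → G.Adj ustar b → G.Adj ustar c →
      G.Adj ustar d → G.Adj c d → G.Adj d a → G.Adj w a → G.Adj w b →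
      a ≠ b → a ≠ c → a ≠ d → b ≠ c → b ≠ d → c ≠ d → False := by
    intro a b c d ha hb hc hd hcd hda hwa hwb nab nac nad nbc nbd ncd
    exact hfree (mk_theta (a := ustar) (b := a) (c := b) (d := w) (e := c) (f := d)
      ha hb hwb.symm hwa hc hcd hda
      hw1.symm hd.ne nab nac nbc nbd (wne c hc) (wne d hd))
  -- w adjacent to two opposite vertices p, r of the 4-cycle p q r s
  have oppcase : ∀ p q r s : V, G.Adj ustar p → G.Adj ustar q → G.Adj ustar r →
      G.Adj ustar s → G.Adj p q → G.Adj q r → G.Adj r s → G.Adj w p → G.Adj w r →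
      p ≠ q → p ≠ r → p ≠ s → q ≠ r → q ≠ s → r ≠ s → False := by
    intro p q r s hp hq hr hs hpq hqr hrs hwp hwr npq npr nps nqr nqs nrs
    exact hfree (mk_theta (a := q) (b := r) (c := p) (d := w) (e := ustar) (f := s)
      hqr hpq.symm hwp.symm hwr hq.symm hs hrs.symm
      (wne q hq).symm nqs npr.symm hr.ne' hp.ne' nps hw1 (wne s hs))
  have d34 : u3 ≠ u4 := hd34.1 u4 rfl
  rcases hu with h | h | h | h <;> rcases hv with h' | h' | h' | h' <;>
    rw [h] at huw huv <;> rw [h'] at hvw huv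
  · exact huv rfl
  · exact adjcase u1 u2 u3 u4 h1 h2 h3 h4 h34 h41 huw.symm hvw.symm d12 d13 d14 d23 d24 d34
  · exact oppcase u1 u2 u3 u4 h1 h2 h3 h4 h12 h23 h34 huw.symm hvw.symm d12 d13 d14 d23 d24 d34
  · exact adjcase u4 u1 u2 u3 h4 h1 h2 h3 h23 h34 hvw.symm huw.symm
      d14.symm d24.symm d34.symm d12 d13 d23
  · exact adjcase u1 u2 u3 u4 h1 h2 h3 h4 h34 h41 hvw.symm huw.symm d12 d13 d14 d23 d24 d34
  · exact huv rfl
  · exact adjcase u2 u3 u4 u1 h2 h3 h4 h1 h41 h12 huw.symm hvw.symm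
      d23 d24 d12.symm d34 d13.symm d14.symm
  · exact oppcase u2 u3 u4 u1 h2 h3 h4 h1 h23 h34 h41 huw.symm hvw.symm
      d23 d24 d12.symm d34 d13.symm d14.symm
  · exact oppcase u1 u2 u3 u4 h1 h2 h3 h4 h12 h23 h34 hvw.symm huw.symm d12 d13 d14 d23 d24 d34
  · exact adjcase u2 u3 u4 u1 h2 h3 h4 h1 h41 h12 hvw.symm huw.symm
      d23 d24 d12.symm d34 d13.symm d14.symm
  · exact huv rfl
  · exact adjcase u3 u4 u1 u2 h3 h4 h1 h2 h12 h23 huw.symm hvw.symm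
      d34 d13.symm d23.symm d14.symm d24.symm d12
  · exact adjcase u4 u1 u2 u3 h4 h1 h2 h3 h23 h34 huw.symm hvw.symm
      d14.symm d24.symm d34.symm d12 d13 d23
  · exact oppcase u2 u3 u4 u1 h2 h3 h4 h1 h23 h34 h41 hvw.symm huw.symm
      d23 d24 d12.symm d34 d13.symm d14.symm
  · exact adjcase u3 u4 u1 u2 h3 h4 h1 h2 h12 h23 hvw.symm huw.symm
      d34 d13.symm d23.symm d14.symm d24.symm d12
  · exact huv rfl
end

section
/- Let G be a θ(1,3,3)-free graph and u* a vertex of G. Then the subgraph of G induced by N(u*) contains no path on 5 vertices. -/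
open Matrix SimpleGraph

/-- if `G` is `θ(1,3,3)`-free, then the subgraph induced on the
neighbourhood of any vertex `u*` contains no path on five vertices. -/
theorem induced_neighborhood_P5_free {V : Type} [Fintype V] (G : SimpleGraph V)
    (hfree : ¬ ContainsSub theta133 G) (ustar : V) :
    ¬ ContainsSub (SimpleGraph.pathGraph 5) (G.induce (G.neighborSet ustar)) := by
  rintro ⟨g, hg⟩
  apply hfree
  -- vertices of the path, as elements of V
  set v : Fin 5 → V := fun i => (g i : V) with hv
  have hmem : ∀ i, G.Adj ustar (v i) := fun i => (g i).2
  have hpath : ∀ i j : Fin 5, (pathGraph 5).Adj i j → G.Adj (v i) (v j) := by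
    intro i j hij
    exact g.map_adj hij
  have hadj01 : G.Adj (v 0) (v 1) := hpath 0 1 (by simp [pathGraph_adj])
  have hadj12 : G.Adj (v 1) (v 2) := hpath 1 2 (by simp [pathGraph_adj])
  have hadj23 : G.Adj (v 2) (v 3) := hpath 2 3 (by rw [pathGraph_adj]; decide)
  have hadj34 : G.Adj (v 3) (v 4) := hpath 3 4 (by rw [pathGraph_adj]; decide)
  have hne : ∀ i j : Fin 5, i ≠ j → v i ≠ v j := by
    intro i j hij h
    exact hij (hg (Subtype.ext h))
  have hus : ∀ i, ustar ≠ v i := fun i h => G.loopless.irrefl _ (h ▸ hmem i)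
  -- map theta133 into G
  let f : Fin 6 → V := ![ustar, v 2, v 0, v 1, v 4, v 3]
  refine ⟨⟨f, ?_⟩, ?_⟩
  · intro a b hab
    rw [theta133] at hab
    simp only [fromEdgeSet_adj, Set.mem_insert_iff, Set.mem_singleton_iff,
      Sym2.eq, Sym2.rel_iff'] at hab
    obtain ⟨h, -⟩ := hab
    rcases h with (h|h)|(h|h)|(h|h)|(h|h)|(h|h)|(h|h)|(h|h) <;>
      obtain ⟨rfl, rfl⟩ := Prod.mk.injEq .. ▸ h <;>
      simp only [f, Matrix.cons_val_zero, Matrix.cons_val_one, Matrix.head_cons,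
        Matrix.cons_val_two, Matrix.cons_val_three, Matrix.cons_val_four, Matrix.tail_cons] <;>
      first
        | exact hmem _
        | exact (hmem _).symm
        | exact hadj01 | exact hadj01.symm
        | exact hadj12 | exact hadj12.symm
        | exact hadj23 | exact hadj23.symm
        | exact hadj34 | exact hadj34.symm
  · intro a b hab
    fin_cases a <;> fin_cases b <;> simp [f] at hab ⊢ <;>
      first
        | rfl
        | exact absurd hab (hus _)
        | exact absurd hab.symm (hus _)
        | exact absurd hab (hne _ _ (by decide))
end

section
/- Let G be a connected graph of size m with Perron vector X, let u* be a vertex with maximum Perron entry, and set W = V(G) \ N[u*]. Suppose ρ(G) > (1 + √(4m−5))/2 and there exists a vertex v at distance 2 from u* with x_v < (1−β)x_{u*} for some 0 < β < 1. Then e(W) < e(N(u*)) − |N_+(u*)| + 3/2 − β·d_{N(u*)}(v), where N_+(u*) is the set of non-isolated vertices of G[N(u*)] and e(·) counts edges in the induced subgraph. -/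
open Matrix SimpleGraph

section helpers
variable {V : Type} [Fintype V] [DecidableEq V] (G : SimpleGraph V) [DecidableRel G.Adj]

private lemma inter_nbr_eq_filter (s : Finset V) (u : V) :
    s ∩ G.neighborFinset u = s.filter (fun w => G.Adj u w) := by
  ext w; simp [and_comm]

private lemma sum_ite_adj_nat (s : Finset V) (u : V) :
    (∑ w ∈ s, if G.Adj u w then (1:ℕ) else 0) = (s ∩ G.neighborFinset u).card := by
  rw [inter_nbr_eq_filter, Finset.sum_boole]; simp

private lemma sum_ite_adj_real (s : Finset V) (u : V) (f : V → ℝ) :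
    (∑ w ∈ s, if G.Adj w u then f w else 0) = ∑ w ∈ s ∩ G.neighborFinset u, f w := by
  rw [inter_nbr_eq_filter, Finset.sum_filter]
  exact Finset.sum_congr rfl (fun w _ => if_congr (G.adj_comm w u) rfl rfl)

private lemma twice_induced_edges (S : Set V) [DecidablePred (· ∈ S)] :
    2 * (G.induce S).edgeSet.ncard = ∑ w ∈ S.toFinset, (S.toFinset ∩ G.neighborFinset w).card := by
  classical
  have h1 : (G.induce S).edgeSet.ncard = (G.induce S).edgeFinset.card := by
    rw [Set.ncard_eq_toFinset_card']
    exact congrArg Finset.card (by ext; simp)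
  rw [h1, ← SimpleGraph.sum_degrees_eq_twice_card_edges,
    Finset.sum_subtype S.toFinset (fun x => Set.mem_toFinset)
      (fun w => (S.toFinset ∩ G.neighborFinset w).card)]
  refine Finset.sum_congr rfl fun a _ => ?_
  rw [SimpleGraph.degree]
  refine Finset.card_bij (fun b _ => (b : V)) ?_ ?_ ?_
  · intro b hb
    simp only [mem_neighborFinset, comap_adj] at hb
    exact Finset.mem_inter.2 ⟨Set.mem_toFinset.2 b.2, (mem_neighborFinset _ _ _).2 hb⟩
  · intro b _ c _ h; exact Subtype.ext h
  · intro w hw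
    simp only [Finset.mem_inter, Set.mem_toFinset, mem_neighborFinset] at hw
    exact ⟨⟨w, hw.1⟩, by simp [mem_neighborFinset, comap_adj, hw.2], rfl⟩

private lemma split_univ {M : Type} [AddCommMonoid M] (u0 : V) (N W : Finset V)
    (hu : u0 ∉ N) (hW : W = Finset.univ \ insert u0 N) (f : V → M) :
    ∑ w, f w = f u0 + ∑ w ∈ N, f w + ∑ w ∈ W, f w := by
  subst hW
  rw [← Finset.sum_sdiff (Finset.subset_univ (insert u0 N)), Finset.sum_insert hu]
  abel

end helpers

set_option maxHeartbeats 1000000 in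
open Classical in
/-- if `ρ(G) > (1 + √(4m-5))/2` and some vertex `v` at distance two from
`u*` has Perron entry less than `(1 - β) x_{u*}` with `0 < β < 1`, then
`e(W) < e(N(u*)) - |N₊(u*)| + 3/2 - β d_{N(u*)}(v)`, where `W = V(G) \ N[u*]`. -/
theorem edge_bound_outside_neighborhood {V : Type} [Fintype V] (G : SimpleGraph V)
    (hconn : G.Connected) (m : ℕ) (hm : G.edgeSet.ncard = m)
    (ρ : ℝ) (x : V → ℝ) (hspec : IsSpecRad G ρ) (hpos : ∀ v, 0 < x v)
    (heig : adjMat G *ᵥ x = ρ • x)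
    (ustar : V) (hmax : ∀ u, x u ≤ x ustar)
    (hρ : (1 + Real.sqrt (4 * m - 5)) / 2 < ρ)
    (β : ℝ) (hβ0 : 0 < β) (hβ1 : β < 1)
    (v : V) (hdist : G.dist ustar v = 2) (hxv : x v < (1 - β) * x ustar) :
    (((G.induce {w : V | w ∉ G.neighborSet ustar ∧ w ≠ ustar}).edgeSet.ncard : ℝ)) <
      ((G.induce (G.neighborSet ustar)).edgeSet.ncard : ℝ)
      - ({u : V | u ∈ G.neighborSet ustar ∧ ∃ w ∈ G.neighborSet ustar, G.Adj u w}.ncard : ℝ)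
      + 3 / 2
      - β * ((G.neighborSet v ∩ G.neighborSet ustar).ncard : ℝ) := by
  classical
  have hxs0 : 0 < x ustar := hpos ustar
  set N : Finset V := G.neighborFinset ustar with hN
  set Wf : Finset V := Finset.univ \ insert ustar N with hWfdef
  have husN : ustar ∉ N := by simp [hN]
  -- v lies in Wf
  have hvne : v ≠ ustar := by
    intro h; rw [h] at hdist; simp [SimpleGraph.dist_self] at hdist
  have hvnadj : ¬ G.Adj ustar v := by
    intro h
    have := SimpleGraph.dist_eq_one_iff_adj.2 h
    omega
  have hvW : v ∈ Wf := by
    simp only [hWfdef, Finset.mem_sdiff, Finset.mem_univ, Finset.mem_insert, true_and,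
      hN, mem_neighborFinset]
    push_neg
    exact ⟨hvne, hvnadj⟩
  -- the eigen-equation, pointwise
  have heq : ∀ u : V, ∑ w ∈ G.neighborFinset u, x w = ρ * x u := by
    intro u
    have h := congrFun heig u
    simp only [Matrix.mulVec, dotProduct, adjMat, Pi.smul_apply, smul_eq_mul] at h
    rw [← h, SimpleGraph.neighborFinset_eq_filter, Finset.sum_filter]
    refine Finset.sum_congr rfl fun w _ => ?_
    by_cases hadj : G.Adj u w <;> simp [adjMat, hadj]
  -- splitting of neighbor sums
  have hnbr : ∀ u : V, ∑ w ∈ G.neighborFinset u, x w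
      = (if G.Adj u ustar then x ustar else 0)
        + (∑ w ∈ N, if G.Adj u w then x w else 0)
        + ∑ w ∈ Wf, if G.Adj u w then x w else 0 := by
    intro u
    rw [SimpleGraph.neighborFinset_eq_filter, Finset.sum_filter]
    exact split_univ ustar N Wf husN hWfdef (fun w => if G.Adj u w then x w else 0)
  have hII : ∑ u ∈ N, x u = ρ * x ustar := heq ustar
  -- master identity
  have hI : ρ * (ρ * x ustar)
      = (N.card : ℝ) * x ustar
        + (∑ w ∈ N, ((N ∩ G.neighborFinset w).card : ℝ) * x w)
        + ∑ w ∈ Wf, ((N ∩ G.neighborFinset w).card : ℝ) * x w := by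
    have h0 : ρ * (ρ * x ustar) = ∑ u ∈ N, ∑ w ∈ G.neighborFinset u, x w := by
      rw [← hII, Finset.mul_sum]
      exact Finset.sum_congr rfl fun u _ => (heq u).symm
    rw [h0, Finset.sum_congr rfl (fun u _ => hnbr u), Finset.sum_add_distrib,
      Finset.sum_add_distrib]
    congr 1
    · congr 1
      · have h1 : ∀ u ∈ N, (if G.Adj u ustar then x ustar else 0) = x ustar := by
          intro u hu
          rw [if_pos ((G.adj_comm ustar u).1 ((G.mem_neighborFinset ustar u).1 hu))]
        rw [Finset.sum_congr rfl h1, Finset.sum_const, nsmul_eq_mul]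
      · rw [Finset.sum_comm]
        refine Finset.sum_congr rfl fun w _ => ?_
        rw [sum_ite_adj_real G N w (fun _ => x w), Finset.sum_const, nsmul_eq_mul]
    · rw [Finset.sum_comm]
      refine Finset.sum_congr rfl fun w _ => ?_
      rw [sum_ite_adj_real G N w (fun _ => x w), Finset.sum_const, nsmul_eq_mul]
  -- Bound B1 on the N-part
  have hB1 : ∑ w ∈ N, ((N ∩ G.neighborFinset w).card : ℝ) * x w
      ≤ (∑ w ∈ N, ((N ∩ G.neighborFinset w).card : ℝ)) * x ustar
        - (∑ w ∈ N, if 0 < (N ∩ G.neighborFinset w).card then (1:ℝ) else 0) * x ustar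
        + ∑ w ∈ N, x w := by
    have hpt : ∀ w ∈ N, ((N ∩ G.neighborFinset w).card : ℝ) * x w
        ≤ ((N ∩ G.neighborFinset w).card : ℝ) * x ustar
          - (if 0 < (N ∩ G.neighborFinset w).card then (1:ℝ) else 0) * x ustar + x w := by
      intro w _
      by_cases h : 0 < (N ∩ G.neighborFinset w).card
      · rw [if_pos h]
        have h1 : (1:ℝ) ≤ ((N ∩ G.neighborFinset w).card : ℝ) := by exact_mod_cast h
        nlinarith [hmax w, hpos w]
      · have h0 : (N ∩ G.neighborFinset w).card = 0 := by omega
        rw [if_neg h, h0]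
        simp
        linarith [hpos w]
    calc ∑ w ∈ N, ((N ∩ G.neighborFinset w).card : ℝ) * x w
        ≤ ∑ w ∈ N, (((N ∩ G.neighborFinset w).card : ℝ) * x ustar
            - (if 0 < (N ∩ G.neighborFinset w).card then (1:ℝ) else 0) * x ustar + x w) :=
          Finset.sum_le_sum hpt
      _ = _ := by
          rw [Finset.sum_add_distrib, Finset.sum_sub_distrib, ← Finset.sum_mul, ← Finset.sum_mul]
  -- Bound B2 on the Wf-part
  have hB2 : ∑ w ∈ Wf, ((N ∩ G.neighborFinset w).card : ℝ) * x w
      ≤ (∑ w ∈ Wf, ((N ∩ G.neighborFinset w).card : ℝ)) * x ustar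
        - β * ((N ∩ G.neighborFinset v).card : ℝ) * x ustar := by
    have hgv_le : ((N ∩ G.neighborFinset v).card : ℝ) * x v
        ≤ ((N ∩ G.neighborFinset v).card : ℝ) * x ustar
          - β * ((N ∩ G.neighborFinset v).card : ℝ) * x ustar := by
      have hgv0 : (0:ℝ) ≤ ((N ∩ G.neighborFinset v).card : ℝ) := Nat.cast_nonneg _
      nlinarith [le_of_lt hxv]
    have h1 : ∑ w ∈ Wf.erase v, ((N ∩ G.neighborFinset w).card : ℝ) * x w
        ≤ ∑ w ∈ Wf.erase v, ((N ∩ G.neighborFinset w).card : ℝ) * x ustar :=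
      Finset.sum_le_sum fun w _ => mul_le_mul_of_nonneg_left (hmax w) (Nat.cast_nonneg _)
    have h2 := Finset.add_sum_erase Wf (fun w => ((N ∩ G.neighborFinset w).card : ℝ) * x w) hvW
    have h3 := Finset.add_sum_erase Wf (fun w => ((N ∩ G.neighborFinset w).card : ℝ)) hvW
    beta_reduce at h2 h3
    rw [← h2, ← h3, add_mul]
    have h4 := Finset.sum_mul (Wf.erase v) (fun w => ((N ∩ G.neighborFinset w).card : ℝ)) (x ustar)
    linarith
  -- identification of edge counts
  have hSN : (G.neighborSet ustar).toFinset = N := by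
    ext w; simp [hN]
  have h2eN : 2 * (G.induce (G.neighborSet ustar)).edgeSet.ncard
      = ∑ w ∈ N, (N ∩ G.neighborFinset w).card := by
    rw [twice_induced_edges G (G.neighborSet ustar), hSN]
  have hSW : ({w : V | w ∉ G.neighborSet ustar ∧ w ≠ ustar} : Set V).toFinset = Wf := by
    ext w
    simp only [Set.mem_toFinset, Set.mem_setOf_eq, hWfdef, Finset.mem_sdiff, Finset.mem_univ,
      Finset.mem_insert, true_and, hN, mem_neighborFinset, mem_neighborSet]
    push_neg
    tauto
  have h2eW : 2 * (G.induce {w : V | w ∉ G.neighborSet ustar ∧ w ≠ ustar}).edgeSet.ncard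
      = ∑ w ∈ Wf, (Wf ∩ G.neighborFinset w).card := by
    rw [twice_induced_edges G {w : V | w ∉ G.neighborSet ustar ∧ w ≠ ustar}, hSW]
  have hp : ({u : V | u ∈ G.neighborSet ustar ∧ ∃ w ∈ G.neighborSet ustar, G.Adj u w}).ncard
      = (N.filter (fun u => 0 < (N ∩ G.neighborFinset u).card)).card := by
    rw [Set.ncard_eq_toFinset_card']
    congr 1
    ext u
    simp only [Set.mem_toFinset, Set.mem_setOf_eq, Finset.mem_filter, Finset.card_pos,
      Finset.Nonempty, Finset.mem_inter, hN, mem_neighborFinset, mem_neighborSet]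
  have hpsum : (∑ w ∈ N, if 0 < (N ∩ G.neighborFinset w).card then (1:ℝ) else 0)
      = ((N.filter (fun u => 0 < (N ∩ G.neighborFinset u).card)).card : ℝ) := by
    rw [Finset.sum_boole]
  have hgv : (G.neighborSet v ∩ G.neighborSet ustar).ncard = (N ∩ G.neighborFinset v).card := by
    rw [Set.ncard_eq_toFinset_card']
    congr 1
    ext w
    simp only [Set.mem_toFinset, Set.mem_inter_iff, mem_neighborSet, Finset.mem_inter, hN,
      mem_neighborFinset]
    tauto
  -- the global edge-count identity 2m = 2d + SgN + 2 SgW + TWW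
  have hdegsum : ∑ u : V, G.degree u = 2 * m := by
    rw [SimpleGraph.sum_degrees_eq_twice_card_edges]
    congr 1
    rw [← hm, Set.ncard_eq_toFinset_card']
    exact congrArg Finset.card (by ext; simp)
  have hdeg2 : ∀ u : V, G.degree u = (if G.Adj ustar u then (1:ℕ) else 0)
      + (N ∩ G.neighborFinset u).card + (Wf ∩ G.neighborFinset u).card := by
    intro u
    have hd : G.degree u = ∑ w : V, if G.Adj u w then (1:ℕ) else 0 := by
      rw [SimpleGraph.degree, SimpleGraph.neighborFinset_eq_filter, Finset.card_filter]
    rw [hd, split_univ ustar N Wf husN hWfdef (fun w => if G.Adj u w then (1:ℕ) else 0),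
      sum_ite_adj_nat, sum_ite_adj_nat]
    congr 2
    exact if_congr (G.adj_comm u ustar) rfl rfl
  have hswap : ∑ u ∈ N, (Wf ∩ G.neighborFinset u).card
      = ∑ w ∈ Wf, (N ∩ G.neighborFinset w).card := by
    rw [Finset.sum_congr rfl (fun u _ => (sum_ite_adj_nat G Wf u).symm),
      Finset.sum_comm,
      Finset.sum_congr rfl (fun w (_ : w ∈ Wf) =>
        Finset.sum_congr rfl (fun u _ => if_congr (G.adj_comm u w) rfl rfl))]
    exact Finset.sum_congr rfl (fun w _ => sum_ite_adj_nat G N w)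
  have hm2 : 2 * m = 2 * N.card + (∑ w ∈ N, (N ∩ G.neighborFinset w).card)
      + 2 * (∑ w ∈ Wf, (N ∩ G.neighborFinset w).card)
      + ∑ w ∈ Wf, (Wf ∩ G.neighborFinset w).card := by
    rw [← hdegsum, Finset.sum_congr rfl (fun u (_ : u ∈ Finset.univ) => hdeg2 u),
      Finset.sum_add_distrib, Finset.sum_add_distrib]
    have t1 : (∑ u : V, if G.Adj ustar u then (1:ℕ) else 0) = N.card := by
      rw [sum_ite_adj_nat G Finset.univ ustar, Finset.univ_inter, hN]
    have t2 : ∑ u : V, (N ∩ G.neighborFinset u).card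
        = N.card + (∑ u ∈ N, (N ∩ G.neighborFinset u).card)
          + ∑ u ∈ Wf, (N ∩ G.neighborFinset u).card := by
      rw [split_univ ustar N Wf husN hWfdef (fun u => (N ∩ G.neighborFinset u).card)]
      congr 2
      rw [hN, Finset.inter_self]
    have t3 : ∑ u : V, (Wf ∩ G.neighborFinset u).card
        = (∑ u ∈ N, (Wf ∩ G.neighborFinset u).card)
          + ∑ u ∈ Wf, (Wf ∩ G.neighborFinset u).card := by
      rw [split_univ ustar N Wf husN hWfdef (fun u => (Wf ∩ G.neighborFinset u).card)]
      have : Wf ∩ G.neighborFinset ustar = ∅ := by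
        ext w
        simp only [Finset.mem_inter, hWfdef, Finset.mem_sdiff, Finset.mem_univ,
          Finset.mem_insert, true_and, Finset.notMem_empty, iff_false, not_and, hN,
          mem_neighborFinset]
        tauto
      rw [this]
      simp
    rw [t1, t2, t3, hswap]
    ring
  -- spectral inequality: m - 3/2 < ρ² - ρ
  have hρ2 : (m:ℝ) - 3/2 < ρ^2 - ρ := by
    have hs := Real.sqrt_nonneg (4*(m:ℝ) - 5)
    have hs2 : 4*(m:ℝ) - 5 ≤ Real.sqrt (4*(m:ℝ)-5)^2 := by
      rcases le_or_gt 0 (4*(m:ℝ)-5) with h|h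
      · rw [Real.sq_sqrt h]
      · nlinarith [sq_nonneg (Real.sqrt (4*(m:ℝ)-5))]
    have hρ' : (1 + Real.sqrt (4*(m:ℝ) - 5)) / 2 < ρ := by
      convert hρ using 3
    nlinarith [hρ', hs, hs2]
  -- put everything together
  have hE : ρ * (ρ * x ustar) - ρ * x ustar
      ≤ ((N.card : ℝ) + (∑ w ∈ N, ((N ∩ G.neighborFinset w).card : ℝ))
          - ((N.filter (fun u => 0 < (N ∩ G.neighborFinset u).card)).card : ℝ)
          + (∑ w ∈ Wf, ((N ∩ G.neighborFinset w).card : ℝ))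
          - β * ((N ∩ G.neighborFinset v).card : ℝ)) * x ustar := by
    rw [hpsum] at hB1
    have hre : ((N.card : ℝ) + (∑ w ∈ N, ((N ∩ G.neighborFinset w).card : ℝ))
          - ((N.filter (fun u => 0 < (N ∩ G.neighborFinset u).card)).card : ℝ)
          + (∑ w ∈ Wf, ((N ∩ G.neighborFinset w).card : ℝ))
          - β * ((N ∩ G.neighborFinset v).card : ℝ)) * x ustar
        = (N.card : ℝ) * x ustar
          + (∑ w ∈ N, ((N ∩ G.neighborFinset w).card : ℝ)) * x ustar
          - ((N.filter (fun u => 0 < (N ∩ G.neighborFinset u).card)).card : ℝ) * x ustar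
          + (∑ w ∈ Wf, ((N ∩ G.neighborFinset w).card : ℝ)) * x ustar
          - β * ((N ∩ G.neighborFinset v).card : ℝ) * x ustar := by ring
    rw [hI, ← hII, hre]
    linarith [hB1, hB2]
  have hEx : ((m:ℝ) - 3/2) * x ustar < ((N.card : ℝ)
      + (∑ w ∈ N, ((N ∩ G.neighborFinset w).card : ℝ))
      - ((N.filter (fun u => 0 < (N ∩ G.neighborFinset u).card)).card : ℝ)
      + (∑ w ∈ Wf, ((N ∩ G.neighborFinset w).card : ℝ))
      - β * ((N ∩ G.neighborFinset v).card : ℝ)) * x ustar := by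
    have h5 : ((m:ℝ) - 3/2) * x ustar < (ρ^2 - ρ) * x ustar :=
      mul_lt_mul_of_pos_right hρ2 hxs0
    have h6 : (ρ^2 - ρ) * x ustar = ρ * (ρ * x ustar) - ρ * x ustar := by ring
    linarith [hE]
  have hlt : (m:ℝ) - 3/2 < (N.card : ℝ)
      + (∑ w ∈ N, ((N ∩ G.neighborFinset w).card : ℝ))
      - ((N.filter (fun u => 0 < (N ∩ G.neighborFinset u).card)).card : ℝ)
      + (∑ w ∈ Wf, ((N ∩ G.neighborFinset w).card : ℝ))
      - β * ((N ∩ G.neighborFinset v).card : ℝ) :=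
    lt_of_mul_lt_mul_right (by linarith [hEx]) (le_of_lt hxs0)
  -- cast the counting identities to ℝ and conclude
  have hc1 : (∑ w ∈ N, ((N ∩ G.neighborFinset w).card : ℝ))
      = ((∑ w ∈ N, (N ∩ G.neighborFinset w).card : ℕ) : ℝ) := by push_cast; rfl
  have hc2 : (∑ w ∈ Wf, ((N ∩ G.neighborFinset w).card : ℝ))
      = ((∑ w ∈ Wf, (N ∩ G.neighborFinset w).card : ℕ) : ℝ) := by push_cast; rfl
  rw [hp, hgv]
  have hm2R : 2 * (m:ℝ) = 2 * (N.card : ℝ)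
      + ((∑ w ∈ N, (N ∩ G.neighborFinset w).card : ℕ) : ℝ)
      + 2 * ((∑ w ∈ Wf, (N ∩ G.neighborFinset w).card : ℕ) : ℝ)
      + ((∑ w ∈ Wf, (Wf ∩ G.neighborFinset w).card : ℕ) : ℝ) := by exact_mod_cast hm2
  have h2eNR : 2 * ((G.induce (G.neighborSet ustar)).edgeSet.ncard : ℝ)
      = ((∑ w ∈ N, (N ∩ G.neighborFinset w).card : ℕ) : ℝ) := by exact_mod_cast h2eN
  have h2eWR : 2 * (((G.induce {w : V | w ∉ G.neighborSet ustar ∧ w ≠ ustar}).edgeSet.ncard : ℕ) : ℝ)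
      = ((∑ w ∈ Wf, (Wf ∩ G.neighborFinset w).card : ℕ) : ℝ) := by exact_mod_cast h2eW
  rw [hc1, hc2] at hlt
  linarith [hlt, hm2R, h2eNR, h2eWR]
end
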